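/- arXiv:1404.7813 — 3 statements merged into one kernel-verified Lean document; each statement's English description precedes it below -/
import Mathlib

section
/- Let K be a regular cone, C₁ = {x ∈ K : c₁ᵀx ≥ c₁₀}, C₂ = {x ∈ K : c₂ᵀx ≥ c₂₀} with c₁₀, c₂₀ ∈ {0,±1}, C₁ ⊄ C₂, C₂ ⊄ C₁, both strictly feasible. Suppose conv(C₁ ∪ C₂) is closed and conv(C₁ ∪ C₂) ≠ K. Then for every u ∈ K \ conv(C₁ ∪ C₂) there exists a valid linear inequality μᵀx ≥ μ₀ for conv(C₁ ∪ C₂) with μᵀu < μ₀ and points x₁ ∈ C₁, x₂ ∈ C₂ with μᵀx₁ = μᵀx₂ = μ₀. -/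
open Set

/-- Dot product on `Fin n → ℝ`. -/
def dot {n : ℕ} (c x : Fin n → ℝ) : ℝ := ∑ i, c i * x i

/-- Dual cone of a set `K ⊆ ℝⁿ`. -/
def dualCone {n : ℕ} (K : Set (Fin n → ℝ)) : Set (Fin n → ℝ) :=
  {y | ∀ x ∈ K, 0 ≤ dot y x}

section Helpers

variable {n : ℕ}

lemma st14_dot_add_left (a b x : Fin n → ℝ) : dot (a + b) x = dot a x + dot b x := by
  simp [dot, add_mul, Finset.sum_add_distrib]

lemma st14_dot_smul_left (r : ℝ) (a x : Fin n → ℝ) : dot (r • a) x = r * dot a x := by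
  simp [dot, Finset.mul_sum, mul_assoc]

lemma st14_dot_add_right (v x y : Fin n → ℝ) : dot v (x + y) = dot v x + dot v y := by
  simp [dot, mul_add, Finset.sum_add_distrib]

lemma st14_dot_smul_right (r : ℝ) (v x : Fin n → ℝ) : dot v (r • x) = r * dot v x := by
  simp [dot, Finset.mul_sum]; apply Finset.sum_congr rfl; intro i _; ring

lemma st14_dot_comm (v x : Fin n → ℝ) : dot v x = dot x v := by
  simp [dot, mul_comm]

lemma st14_dot_self_pos {v : Fin n → ℝ} (hv : v ≠ 0) : 0 < dot v v := by
  have : ∃ j, v j ≠ 0 := by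
    by_contra h
    push_neg at h
    exact hv (funext h)
  obtain ⟨j, hj⟩ := this
  apply Finset.sum_pos' (fun i _ => mul_self_nonneg _) ⟨j, Finset.mem_univ j, mul_self_pos.mpr hj⟩

/-- `dot v` as a continuous linear map. -/
noncomputable def st14_dotL (v : Fin n → ℝ) : (Fin n → ℝ) →L[ℝ] ℝ :=
  LinearMap.toContinuousLinearMap
    { toFun := fun x => dot v x
      map_add' := st14_dot_add_right v
      map_smul' := fun r x => by simpa using st14_dot_smul_right r v x }

@[simp] lemma st14_dotL_apply (v x : Fin n → ℝ) : st14_dotL v x = dot v x := rfl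

/-- The vector representing a continuous linear functional. -/
noncomputable def st14_vecOf (f : (Fin n → ℝ) →L[ℝ] ℝ) : Fin n → ℝ :=
  fun i => f (fun j => if i = j then 1 else 0)

lemma st14_dot_vecOf (f : (Fin n → ℝ) →L[ℝ] ℝ) (x : Fin n → ℝ) :
    dot (st14_vecOf f) x = f x := by
  conv_rhs => rw [pi_eq_sum_univ x, map_sum]
  rw [dot]
  apply Finset.sum_congr rfl
  intro i _
  rw [map_smul, smul_eq_mul, st14_vecOf, mul_comm]

lemma st14_dot_bound (v x : Fin n → ℝ) : |dot v x| ≤ (∑ i, |v i|) * ‖x‖ := by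
  rw [dot]
  refine (Finset.abs_sum_le_sum_abs _ _).trans ?_
  rw [Finset.sum_mul]
  apply Finset.sum_le_sum
  intro i _
  rw [abs_mul]
  have h1 : |x i| ≤ ‖x‖ := by
    have := norm_le_pi_norm x i
    simpa [Real.norm_eq_abs] using this
  exact mul_le_mul_of_nonneg_left h1 (abs_nonneg _)

/-- Attainment of the minimum of a coercive linear functional on a closed set. -/
lemma st14_exists_min (S : Set (Fin n → ℝ)) (hS : IsClosed S) (x0 : Fin n → ℝ) (hx0 : x0 ∈ S)
    (v : Fin n → ℝ) (c η : ℝ) (hη : 0 < η) (hco : ∀ x ∈ S, c + η * ‖x‖ ≤ dot v x) :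
    ∃ z ∈ S, ∀ x ∈ S, dot v z ≤ dot v x := by
  set R := (dot v x0 - c) / η with hR
  have hx0R : ‖x0‖ ≤ R := by
    rw [hR, le_div_iff₀ hη]
    have := hco x0 hx0
    linarith [mul_comm η ‖x0‖]
  have hcpt : IsCompact (S ∩ Metric.closedBall 0 R) :=
    (isCompact_closedBall (0 : Fin n → ℝ) R).inter_left hS
  have hne : (S ∩ Metric.closedBall 0 R).Nonempty :=
    ⟨x0, hx0, by simpa [Metric.mem_closedBall, dist_zero_right] using hx0R⟩
  obtain ⟨z, hz, hzmin⟩ := hcpt.exists_isMinOn hne ((st14_dotL v).continuous.continuousOn)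
  refine ⟨z, hz.1, fun x hx => ?_⟩
  by_cases hxR : ‖x‖ ≤ R
  · have := isMinOn_iff.mp hzmin x ⟨hx, by simpa [Metric.mem_closedBall, dist_zero_right] using hxR⟩
    simpa using this
  · push_neg at hxR
    have h1 : dot v x0 ≤ dot v x := by
      have h2 := hco x hx
      have h3 : c + η * R ≤ c + η * ‖x‖ := by nlinarith
      have h4 : c + η * R = dot v x0 := by
        rw [hR]
        field_simp
        ring
      linarith
    have := isMinOn_iff.mp hzmin x0 ⟨hx0, by simpa [Metric.mem_closedBall, dist_zero_right] using hx0R⟩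
    simp only [st14_dotL_apply] at this
    linarith

/-- Existence of a functional strictly positive on a pointed closed cone,
with coercivity constant (with respect to the sup norm on `Fin n → ℝ`). -/
lemma st14_exists_e {n : ℕ} (K : Set (Fin n → ℝ))
    (hKclosed : IsClosed K) (hKconv : Convex ℝ K)
    (hKcone : ∀ x ∈ K, ∀ t : ℝ, 0 ≤ t → t • x ∈ K)
    (hKpointed : ∀ x, x ∈ K → -x ∈ K → x = 0)
    (hKne : K.Nonempty) :
    ∃ e δ, 0 < δ ∧ ∀ x ∈ K, δ * ‖x‖ ≤ dot e x := by
  classical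
  -- the set K viewed in Euclidean space
  have hKaddmem : ∀ x ∈ K, ∀ y ∈ K, x + y ∈ K := by
    intro x hx y hy
    have hmid : (1/2 : ℝ) • x + (1/2 : ℝ) • y ∈ K :=
      hKconv hx hy (by norm_num) (by norm_num) (by norm_num)
    have := hKcone _ hmid 2 (by norm_num)
    have h2 : (2:ℝ) • ((1/2 : ℝ) • x + (1/2 : ℝ) • y) = x + y := by
      rw [smul_add, smul_smul, smul_smul]; norm_num
    rwa [h2] at this
  set KE : Set (EuclideanSpace ℝ (Fin n)) := WithLp.ofLp ⁻¹' K with hKE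
  have h0K : (0 : Fin n → ℝ) ∈ K := by
    obtain ⟨y, hy⟩ := hKne
    simpa using hKcone y hy 0 le_rfl
  set Kc : ProperCone ℝ (EuclideanSpace ℝ (Fin n)) :=
    { carrier := KE
      zero_mem' := by simpa [hKE] using h0K
      smul_mem' := fun c x hx => by
        have := hKcone _ hx (c : ℝ) c.2
        simpa [hKE, NNReal.smul_def] using this
      add_mem' := fun {x} {y} hx hy => by simpa [hKE] using hKaddmem _ hx _ hy
      isClosed' := hKclosed.preimage (PiLp.continuous_ofLp 2 _) } with hKc
  have hKcS : (Kc : Set (EuclideanSpace ℝ (Fin n))) = KE := rfl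
  set D : Set (EuclideanSpace ℝ (Fin n)) := (ProperCone.innerDual (Kc : Set (EuclideanSpace ℝ (Fin n))) : Set (EuclideanSpace ℝ (Fin n))) with hD
  have hDconv : Convex ℝ D := by
    rw [hD]
    intro x hx y hy a b ha hb _
    rw [SetLike.mem_coe, ProperCone.mem_innerDual] at hx hy ⊢
    intro z hz
    rw [inner_add_right, inner_smul_right, inner_smul_right]
    have := hx hz
    have := hy hz
    positivity
  have hzeroD : (0:EuclideanSpace ℝ (Fin n)) ∈ D := by rw [hD]; exact SetLike.mem_coe.mpr (zero_mem _)
  -- interior of D is nonempty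
  have hint : (interior D).Nonempty := by
    by_contra hempty
    rw [not_nonempty_iff_eq_empty] at hempty
    have haff : affineSpan ℝ D ≠ ⊤ := by
      intro htop
      have := (hDconv.interior_nonempty_iff_affineSpan_eq_top).2 htop
      rw [hempty] at this
      exact (not_nonempty_empty this)
    -- the direction of the affine span
    set A := affineSpan ℝ D with hA
    set W := A.direction with hW
    have hWne : W ≠ ⊤ := by
      intro htop
      apply haff
      rw [eq_top_iff]
      intro x _
      have h0A : (0:EuclideanSpace ℝ (Fin n)) ∈ A := subset_affineSpan ℝ D hzeroD
      have hxW : x ∈ W := htop ▸ Submodule.mem_top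
      have := AffineSubspace.vadd_mem_of_mem_direction (hW ▸ hxW) h0A
      simpa using this
    have hWbot : Wᗮ ≠ ⊥ := by
      intro hbot
      exact hWne (Submodule.orthogonal_eq_bot_iff.mp hbot)
    obtain ⟨v, hvW, hvne⟩ := Submodule.exists_mem_ne_zero_of_ne_bot hWbot
    have hvzero : ∀ y ∈ D, inner ℝ v y = 0 := by
      intro y hy
      have hyA : y ∈ A := subset_affineSpan ℝ D hy
      have h0A : (0:EuclideanSpace ℝ (Fin n)) ∈ A := subset_affineSpan ℝ D hzeroD
      have hyW : y - 0 ∈ W := AffineSubspace.vsub_mem_direction hyA h0A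
      rw [sub_zero] at hyW
      rw [real_inner_comm]
      exact (Submodule.mem_orthogonal W v).mp hvW y hyW
    -- v and -v are in the double dual, which equals K
    have hbipolar := ProperCone.innerDual_innerDual Kc
    have hvK : v ∈ KE := by
      have : v ∈ ((ProperCone.innerDual D : Set (EuclideanSpace ℝ (Fin n)))) := by
        rw [SetLike.mem_coe, ProperCone.mem_innerDual]
        intro x hx
        rw [real_inner_comm, hvzero x hx]
      rw [hD] at this
      have h2 : v ∈ (Kc : Set (EuclideanSpace ℝ (Fin n))) := by rw [← hbipolar]; exact this
      rwa [hKcS] at h2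
    have hvnegK : -v ∈ KE := by
      have : -v ∈ ((ProperCone.innerDual D : Set (EuclideanSpace ℝ (Fin n)))) := by
        rw [SetLike.mem_coe, ProperCone.mem_innerDual]
        intro x hx
        rw [inner_neg_right, real_inner_comm, hvzero x hx, neg_zero]
      rw [hD] at this
      have h2 : -v ∈ (Kc : Set (EuclideanSpace ℝ (Fin n))) := by rw [← hbipolar]; exact this
      rwa [hKcS] at h2
    exact hvne (by simpa using congrArg (WithLp.toLp 2) (hKpointed _ hvK (by simpa [hKE] using hvnegK)))
  obtain ⟨e, he⟩ := hint
  obtain ⟨r, hr, hball⟩ := Metric.mem_nhds_iff.mp (mem_interior_iff_mem_nhds.mp he)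
  refine ⟨WithLp.ofLp e, r/2, by linarith, ?_⟩
  intro x hx
  by_cases hx0 : x = (0 : Fin n → ℝ)
  · simp [hx0, dot]
  · -- work in H
    set xH : EuclideanSpace ℝ (Fin n) := WithLp.toLp 2 x with hxH
    have hxHne : xH ≠ 0 := fun h => hx0 (by simpa [hxH] using congrArg WithLp.ofLp h)
    have hnorm_pos : (0:ℝ) < ‖xH‖ := norm_pos_iff.mpr hxHne
    set e' : EuclideanSpace ℝ (Fin n) := e - ((r/2) * ‖xH‖⁻¹) • xH with he'
    have he'D : e' ∈ D := by
      apply hball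
      rw [Metric.mem_ball, he', dist_eq_norm]
      have : e - (r/2 * ‖xH‖⁻¹) • xH - e = -((r/2 * ‖xH‖⁻¹) • xH) := by abel
      rw [this, norm_neg, norm_smul]
      have h1 : ‖(r/2 * ‖xH‖⁻¹ : ℝ)‖ = r/2 * ‖xH‖⁻¹ := by
        rw [Real.norm_eq_abs, abs_of_nonneg]
        positivity
      rw [h1]
      rw [mul_assoc, inv_mul_cancel₀ (ne_of_gt hnorm_pos), mul_one]
      linarith
    have hip : (0:ℝ) ≤ inner ℝ xH e' := by
      rw [hD, SetLike.mem_coe, ProperCone.mem_innerDual] at he'D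
      exact he'D (x := xH) (by rw [hKcS]; exact hx)
    rw [he', inner_sub_right, inner_smul_right, real_inner_self_eq_norm_sq] at hip
    have hinner_ge : (r/2) * ‖xH‖ ≤ inner ℝ xH e := by
      have h2 : (r/2 * ‖xH‖⁻¹) * ‖xH‖^2 = (r/2) * ‖xH‖ := by
        field_simp
      nlinarith [hip]
    -- translate to dot and the sup norm
    have hdot : inner ℝ xH e = dot (WithLp.ofLp e) x := by
      rw [st14_dot_comm]
      simp [hxH, dot, PiLp.inner_apply, RCLike.inner_apply, starRingEnd_apply, mul_comm]
    have hnorms : ‖x‖ ≤ ‖xH‖ := by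
      apply (pi_norm_le_iff_of_nonneg (norm_nonneg xH)).2
      intro i
      rw [EuclideanSpace.norm_eq]
      rw [show ‖x i‖ = Real.sqrt (‖xH i‖^2) by rw [Real.sqrt_sq_eq_abs]; simp [Real.norm_eq_abs, hxH]]
      apply Real.sqrt_le_sqrt
      exact Finset.single_le_sum (f := fun j => ‖xH j‖^2) (fun j _ => by positivity) (Finset.mem_univ i)
    rw [← hdot]
    nlinarith [hinner_ge]

/-- Convex combination of two strict inequalities. -/
lemma st14_combo_lt {s x y m : ℝ} (h0 : 0 ≤ s) (h1 : s ≤ 1) (hx : x < m) (hy : y < m) :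
    (1 - s) * x + s * y < m := by
  rcases eq_or_lt_of_le h0 with h | h
  · rw [← h]; simpa using hx
  · have : (1 - s) * x ≤ (1 - s) * m := by nlinarith
    nlinarith

lemma st14_combo_lt' {t a b a' b' : ℝ} (h0 : 0 ≤ t) (h1 : t ≤ 1) (ha : a < a') (hb : b < b') :
    (1 - t) * a + t * b < (1 - t) * a' + t * b' := by
  rcases eq_or_lt_of_le h0 with h | h
  · rw [← h]; simpa using ha
  · have : (1 - t) * a ≤ (1 - t) * a' := by nlinarith
    nlinarith

lemma st14_combo_le_max {s p q : ℝ} (h0 : 0 ≤ s) (h1 : s ≤ 1) :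
    (1 - s) * p + s * q ≤ max p q := by
  have hp : p ≤ max p q := le_max_left _ _
  have hq : q ≤ max p q := le_max_right _ _
  nlinarith

/-- Entry point of a segment into a closed convex set, with supporting hyperplane. -/
lemma st14_entry (Q : Set (Fin n → ℝ)) (hQconv : Convex ℝ Q) (hQclosed : IsClosed Q)
    (u b : Fin n → ℝ) (hu : u ∉ Q) (hb : b ∈ interior Q) :
    ∃ (w : Fin n → ℝ) (w₀ : ℝ) (q : Fin n → ℝ) (s : ℝ),
      q ∈ Q ∧ (∀ x ∈ Q, w₀ ≤ dot w x) ∧ dot w q = w₀ ∧ dot w u < w₀ ∧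
      0 ≤ s ∧ s ≤ 1 ∧ q = (1 - s) • u + s • b := by
  classical
  set γ : ℝ → (Fin n → ℝ) := fun s => (1 - s) • u + s • b with hγ
  have hγcont : Continuous γ := by
    apply Continuous.add
    · exact (continuous_const.sub continuous_id).smul continuous_const
    · exact continuous_id.smul continuous_const
  set T : Set ℝ := {s | s ∈ Icc (0:ℝ) 1 ∧ γ s ∈ Q} with hT
  have hTclosed : IsClosed T := by
    have : T = Icc (0:ℝ) 1 ∩ γ ⁻¹' Q := rfl
    rw [this]
    exact isClosed_Icc.inter (hQclosed.preimage hγcont)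
  have h1T : (1:ℝ) ∈ T := by
    constructor
    · exact ⟨zero_le_one, le_refl 1⟩
    · have : γ 1 = b := by simp [hγ]
      rw [this]
      exact interior_subset hb
  have hTne : T.Nonempty := ⟨1, h1T⟩
  have hTbdd : BddBelow T := ⟨0, fun t ht => ht.1.1⟩
  set s₀ := sInf T with hs₀
  have hs₀T : s₀ ∈ T := hTclosed.csInf_mem hTne hTbdd
  have hs₀min : ∀ t ∈ T, s₀ ≤ t := fun t ht => csInf_le hTbdd ht
  set q := γ s₀ with hq
  have hqQ : q ∈ Q := hs₀T.2
  have hs₀0 : 0 ≤ s₀ := hs₀T.1.1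
  have hs₀1 : s₀ ≤ 1 := hs₀T.1.2
  have hs₀pos : 0 < s₀ := by
    rcases eq_or_lt_of_le hs₀0 with h | h
    · exfalso
      apply hu
      have h2 : u = γ s₀ := by rw [← h]; simp [hγ]
      rw [h2]
      exact hqQ
    · exact h
  have hqint : q ∉ interior Q := by
    intro hqint
    obtain ⟨ε, hε, hball⟩ := Metric.isOpen_iff.mp (isOpen_interior.preimage hγcont) s₀
      (by exact hqint)
    set s' := max (s₀ - ε/2) 0 with hs'
    have hs'mem : s' ∈ Metric.ball s₀ ε := by
      rw [Metric.mem_ball, Real.dist_eq]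
      rcases le_or_gt 0 (s₀ - ε/2) with h | h
      · rw [hs', max_eq_left h]
        rw [abs_of_nonpos (by linarith)]
        linarith
      · rw [hs', max_eq_right (le_of_lt h)]
        rw [abs_of_nonpos (by linarith)]
        simp only [neg_sub, sub_zero]
        linarith
    have hs'Q : γ s' ∈ Q := interior_subset (hball hs'mem)
    have hs'lt : s' < s₀ := by
      apply max_lt
      · linarith
      · exact hs₀pos
    have : s' ∈ T := ⟨⟨le_max_right _ _, le_trans (le_of_lt hs'lt) hs₀1⟩, hs'Q⟩
    exact absurd (hs₀min s' this) (not_le.mpr hs'lt)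
  -- supporting hyperplane at q
  obtain ⟨f, hf⟩ := geometric_hahn_banach_open_point hQconv.interior isOpen_interior hqint
  have hfQ : ∀ x ∈ Q, f x ≤ f q := by
    intro x hx
    have hseq : ∀ t ∈ Ioo (0:ℝ) 1, t * f b + (1 - t) * f x < f q := by
      intro t ht
      have hmem : t • b + (1 - t) • x ∈ interior Q :=
        hQconv.combo_interior_self_mem_interior hb hx ht.1 (by linarith [ht.2]) (by ring)
      have := hf _ hmem
      rwa [map_add, map_smul, map_smul, smul_eq_mul, smul_eq_mul] at this
    have htend : Filter.Tendsto (fun t : ℝ => t * f b + (1 - t) * f x)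
        (nhdsWithin 0 (Ioi 0)) (nhds (f x)) := by
      have hcont : Continuous (fun t : ℝ => t * f b + (1 - t) * f x) := by
        apply Continuous.add
        · exact continuous_id.mul continuous_const
        · exact (continuous_const.sub continuous_id).mul continuous_const
      have h := (hcont.tendsto 0).mono_left (nhdsWithin_le_nhds : nhdsWithin (0:ℝ) (Ioi 0) ≤ nhds 0)
      simpa using h
    apply le_of_tendsto htend
    apply Filter.eventually_of_mem (Ioo_mem_nhdsGT_of_mem ⟨le_refl (0:ℝ), zero_lt_one⟩)
    intro t ht
    exact le_of_lt (hseq t ht)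
  have hfb : f b < f q := hf b hb
  have hs₀lt1 : s₀ < 1 := by
    rcases eq_or_lt_of_le hs₀1 with h | h
    · exfalso
      apply hqint
      have : γ 1 = b := by simp [hγ]
      rw [hq, h, this]
      exact hb
    · exact h
  have hfq : f q = (1 - s₀) * f u + s₀ * f b := by
    rw [hq, hγ]
    simp only [map_add, map_smul, smul_eq_mul]
  have hfu : f q < f u := by
    have h1 : (1 - s₀) * f q < (1 - s₀) * f u := by nlinarith
    exact lt_of_mul_lt_mul_left h1 (by linarith)
  refine ⟨st14_vecOf (-f), -(f q), q, s₀, hqQ, ?_, ?_, ?_, hs₀0, hs₀1, rfl⟩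
  · intro x hx
    rw [st14_dot_vecOf]
    simp only [ContinuousLinearMap.neg_apply]
    linarith [hfQ x hx]
  · rw [st14_dot_vecOf]
    simp
  · rw [st14_dot_vecOf]
    simp only [ContinuousLinearMap.neg_apply]
    linarith

/-- Construction of a strictly feasible interior point on one side but outside the other. -/
lemma st14_mix (K : Set (Fin n → ℝ)) (hKconv : Convex ℝ K) (hKclosed : IsClosed K)
    (c c' : Fin n → ℝ) (c₀ c₀' : ℝ) (hc : c ≠ 0)
    (a : Fin n → ℝ) (haK : a ∈ interior K) (hac : c₀ ≤ dot c a)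
    (bb : Fin n → ℝ) (hbK : bb ∈ K) (hbc : c₀ ≤ dot c bb) (hbc' : dot c' bb < c₀') :
    ∃ p, p ∈ interior K ∧ c₀ < dot c p ∧ dot c' p < c₀' := by
  set gap := c₀' - dot c' bb with hgap
  have hgappos : 0 < gap := by rw [hgap]; linarith
  set d := dot c' a - dot c' bb with hd
  set θ := min 1 (gap / (2 * (|d| + 1))) with hθ
  have hθpos : 0 < θ := by
    apply lt_min zero_lt_one
    positivity
  have hθ1 : θ ≤ 1 := min_le_left _ _
  set p₁ := θ • a + (1 - θ) • bb with hp₁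
  have hp₁int : p₁ ∈ interior K :=
    hKconv.combo_interior_closure_mem_interior haK
      (subset_closure hbK) hθpos (by linarith) (by ring)
  have hp₁c : c₀ ≤ dot c p₁ := by
    rw [hp₁, st14_dot_add_right, st14_dot_smul_right, st14_dot_smul_right]
    nlinarith
  have hp₁c' : dot c' p₁ < c₀' := by
    rw [hp₁, st14_dot_add_right, st14_dot_smul_right, st14_dot_smul_right]
    have h1 : θ * dot c' a + (1 - θ) * dot c' bb = dot c' bb + θ * d := by rw [hd]; ring
    rw [h1]
    have h2 : θ * d ≤ θ * |d| := by
      have := le_abs_self d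
      nlinarith
    have h3 : θ ≤ gap / (2 * (|d| + 1)) := min_le_right _ _
    have h4 : θ * |d| ≤ (gap / (2 * (|d| + 1))) * |d| := by
      apply mul_le_mul_of_nonneg_right h3 (abs_nonneg d)
    have h5 : (gap / (2 * (|d| + 1))) * |d| ≤ gap / 2 := by
      rw [div_mul_eq_mul_div, div_le_div_iff₀ (by positivity) (by norm_num)]
      nlinarith [abs_nonneg d]
    rw [hgap] at *
    linarith
  -- nudge along c
  obtain ⟨r, hr, hball⟩ := Metric.isOpen_iff.mp isOpen_interior p₁ hp₁int
  set gap₂ := c₀' - dot c' p₁ with hgap₂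
  have hgap₂pos : 0 < gap₂ := by rw [hgap₂]; linarith
  set η := min (r / (2 * (‖c‖ + 1))) (gap₂ / (2 * (|dot c' c| + 1))) with hη
  have hηpos : 0 < η := by
    apply lt_min <;> positivity
  refine ⟨p₁ + η • c, ?_, ?_, ?_⟩
  · apply hball
    rw [Metric.mem_ball, dist_eq_norm]
    have : p₁ + η • c - p₁ = η • c := by abel
    rw [this, norm_smul, Real.norm_eq_abs, abs_of_pos hηpos]
    have h1 : η ≤ r / (2 * (‖c‖ + 1)) := min_le_left _ _
    have h2 : η * ‖c‖ ≤ (r / (2 * (‖c‖ + 1))) * ‖c‖ :=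
      mul_le_mul_of_nonneg_right h1 (norm_nonneg c)
    have h3 : (r / (2 * (‖c‖ + 1))) * ‖c‖ ≤ r / 2 := by
      rw [div_mul_eq_mul_div, div_le_div_iff₀ (by positivity) (by norm_num)]
      nlinarith [norm_nonneg c]
    linarith
  · rw [st14_dot_add_right, st14_dot_smul_right]
    have := st14_dot_self_pos hc
    nlinarith
  · rw [st14_dot_add_right, st14_dot_smul_right]
    have h1 : η ≤ gap₂ / (2 * (|dot c' c| + 1)) := min_le_right _ _
    have h2 : η * dot c' c ≤ η * |dot c' c| := by
      have := le_abs_self (dot c' c)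
      nlinarith
    have h4 : η * |dot c' c| ≤ (gap₂ / (2 * (|dot c' c| + 1))) * |dot c' c| :=
      mul_le_mul_of_nonneg_right h1 (abs_nonneg _)
    have h5 : (gap₂ / (2 * (|dot c' c| + 1))) * |dot c' c| ≤ gap₂ / 2 := by
      rw [div_mul_eq_mul_div, div_le_div_iff₀ (by positivity) (by norm_num)]
      nlinarith [abs_nonneg (dot c' c)]
    rw [hgap₂] at *
    linarith

/-- A tight-point splitting helper. -/
lemma st14_tight_of_combo {θ Da Db w₀ : ℝ} (hθ0 : 0 ≤ θ) (hθ1 : θ < 1)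
    (ha : w₀ ≤ Da) (hb : w₀ ≤ Db) (heq : θ * Da + (1 - θ) * Db = w₀) : Db = w₀ := by
  have h1 : θ * (Da - w₀) ≥ 0 := by nlinarith
  have h2 : (1 - θ) * (Db - w₀) = -(θ * (Da - w₀)) := by nlinarith
  have h3 : (1 - θ) * (Db - w₀) ≤ 0 := by rw [h2]; linarith
  have h4 : Db - w₀ ≤ 0 := by
    by_contra h
    push_neg at h
    nlinarith
  linarith

/-- Coercification: from a valid separating inequality tight at a point of `T`,
produce either a tight point in `S` as well, or a coercive valid separating
inequality tight at a point of `T`. -/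
lemma st14_coercify (Q S T K : Set (Fin n → ℝ))
    (hQK : Q ⊆ K) (hQclosed : IsClosed Q) (hSclosed : IsClosed S)
    (hSQ : S ⊆ Q) (hTQ : T ⊆ Q)
    (HS : ∀ x ∈ Q, ∃ a ∈ S, ∃ b ∈ T, ∃ θ : ℝ, 0 ≤ θ ∧ θ ≤ 1 ∧ x = θ • a + (1 - θ) • b)
    (e : Fin n → ℝ) (δ : ℝ) (hδ : 0 < δ) (he : ∀ x ∈ K, δ * ‖x‖ ≤ dot e x)
    (u : Fin n → ℝ) (huK : u ∈ K)
    (A : Fin n → ℝ) (A₀ : ℝ) (p : Fin n → ℝ)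
    (hAvalid : ∀ x ∈ Q, A₀ ≤ dot A x) (hpQ : p ∈ Q) (hpT : p ∈ T) (hptight : dot A p = A₀)
    (hAsep : dot A u < A₀) :
    (∃ x₁ ∈ S, dot A x₁ = A₀) ∨
    (∃ (A' : Fin n → ℝ) (A₀' c η : ℝ) (x₂ : Fin n → ℝ),
      0 < η ∧ (∀ x ∈ Q, A₀' ≤ dot A' x) ∧ (∀ x ∈ Q, c + η * ‖x‖ ≤ dot A' x) ∧
      x₂ ∈ T ∧ dot A' x₂ = A₀' ∧ dot A' u < A₀') := by
  classical
  have heu : 0 ≤ dot e u := le_trans (by positivity) (he u huK)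
  have hepos : ∀ x ∈ Q, 0 ≤ dot e x := fun x hx => le_trans (by positivity) (he x (hQK hx))
  set gap := A₀ - dot A u with hgapdef
  have hgap : 0 < gap := by rw [hgapdef]; linarith
  set ε₀ := gap / (2 * (dot e u + 1)) with hε₀def
  have hε₀pos : 0 < ε₀ := by positivity
  have hε₀sep : ε₀ * dot e u < gap := by
    rw [hε₀def]
    rw [div_mul_eq_mul_div, div_lt_iff₀ (by positivity)]
    nlinarith
  set ε : ℕ → ℝ := fun k => ε₀ / (k + 1) with hεdef
  have hεpos : ∀ k, 0 < ε k := fun k => by positivity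
  have hεle : ∀ k, ε k ≤ ε₀ := by
    intro k
    rw [hεdef]
    apply div_le_self (le_of_lt hε₀pos)
    push_cast
    linarith [Nat.cast_nonneg (α := ℝ) k]
  set Aε : ℕ → (Fin n → ℝ) := fun k => A + (ε k) • e with hAεdef
  have hAεval : ∀ k x, dot (Aε k) x = dot A x + ε k * dot e x := by
    intro k x
    rw [hAεdef]
    rw [st14_dot_add_left, st14_dot_smul_left]
  have hAεco : ∀ k, ∀ x ∈ Q, A₀ + (ε k * δ) * ‖x‖ ≤ dot (Aε k) x := by
    intro k x hx
    rw [hAεval]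
    have h1 := he x (hQK hx)
    have h2 := hAvalid x hx
    have h3 := (hεpos k)
    nlinarith
  have hmin : ∀ k : ℕ, ∃ z ∈ Q, ∀ x ∈ Q, dot (Aε k) z ≤ dot (Aε k) x := by
    intro k
    exact st14_exists_min Q hQclosed p hpQ (Aε k) A₀ (ε k * δ)
      (by positivity) (hAεco k)
  choose z hzQ hzmin using hmin
  have hMle : ∀ k, dot (Aε k) (z k) ≤ A₀ + ε k * dot e p := by
    intro k
    have := hzmin k p hpQ
    rw [hAεval k p, hptight] at this
    exact this
  have hMge : ∀ k, A₀ ≤ dot (Aε k) (z k) := by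
    intro k
    rw [hAεval]
    have h1 := hAvalid (z k) (hzQ k)
    have h2 := hepos (z k) (hzQ k)
    nlinarith [hεpos k]
  have hznorm : ∀ k, ‖z k‖ ≤ dot e p / δ := by
    intro k
    have h1 := hAεco k (z k) (hzQ k)
    have h2 := hMle k
    have h3 : (ε k * δ) * ‖z k‖ ≤ ε k * dot e p := by linarith
    have h4 : δ * ‖z k‖ ≤ dot e p := by
      have := hεpos k
      nlinarith
    rw [le_div_iff₀ hδ]
    linarith [mul_comm δ ‖z k‖]
  have hdecomp : ∀ k : ℕ, ∃ a ∈ S, ∃ b ∈ T, ∃ θ : ℝ,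
      0 ≤ θ ∧ θ ≤ 1 ∧ z k = θ • a + (1 - θ) • b := fun k => HS (z k) (hzQ k)
  choose a ha b hb θ hθ0 hθ1 hzeq using hdecomp
  by_cases hcase : ∃ k, θ k < 1
  · obtain ⟨k, hk⟩ := hcase
    right
    have hbtight : dot (Aε k) (b k) = dot (Aε k) (z k) := by
      have hsplit : dot (Aε k) (z k)
          = θ k * dot (Aε k) (a k) + (1 - θ k) * dot (Aε k) (b k) := by
        conv_lhs => rw [hzeq k]
        rw [st14_dot_add_right, st14_dot_smul_right, st14_dot_smul_right]
      exact st14_tight_of_combo (hθ0 k) hk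
        (hzmin k (a k) (hSQ (ha k))) (hzmin k (b k) (hTQ (hb k))) hsplit.symm
    refine ⟨Aε k, dot (Aε k) (z k), A₀, ε k * δ, b k, by positivity,
      hzmin k, hAεco k, hb k, hbtight, ?_⟩
    have h1 : dot (Aε k) u = dot A u + ε k * dot e u := hAεval k u
    have h2 : ε k * dot e u ≤ ε₀ * dot e u := mul_le_mul_of_nonneg_right (hεle k) heu
    have h3 := hMge k
    rw [h1]
    rw [hgapdef] at hε₀sep
    linarith
  · push_neg at hcase
    left
    have hzS : ∀ k, z k ∈ S := by
      intro k
      have hθeq : θ k = 1 := le_antisymm (hθ1 k) (hcase k)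
      have : z k = a k := by
        rw [hzeq k, hθeq]
        simp
      rw [this]
      exact ha k
    -- limit point
    set R₀ := dot e p / δ with hR₀
    have hcpt : IsCompact (S ∩ Metric.closedBall 0 R₀) :=
      (isCompact_closedBall (0 : Fin n → ℝ) R₀).inter_left hSclosed
    have hzmem : ∀ k, z k ∈ S ∩ Metric.closedBall 0 R₀ := by
      intro k
      exact ⟨hzS k, by simpa [Metric.mem_closedBall, dist_zero_right] using hznorm k⟩
    obtain ⟨z₀, hz₀mem, φ, hφ, hconv⟩ := hcpt.tendsto_subseq hzmem
    have hz₀Q : z₀ ∈ Q := by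
      apply hQclosed.mem_of_tendsto hconv
      exact Filter.Eventually.of_forall (fun k => hzQ (φ k))
    have htendA : Filter.Tendsto (fun k => dot A (z (φ k))) Filter.atTop (nhds (dot A z₀)) := by
      have hcontA := (st14_dotL A).continuous
      have := (hcontA.tendsto z₀).comp hconv
      exact this
    have hεtend : Filter.Tendsto (fun k => A₀ + ε (φ k) * dot e p) Filter.atTop (nhds A₀) := by
      have h1 : Filter.Tendsto (fun k : ℕ => (1:ℝ) / (k + 1)) Filter.atTop (nhds 0) :=
        tendsto_one_div_add_atTop_nhds_zero_nat
      have h2 : Filter.Tendsto (fun k : ℕ => (1:ℝ) / (φ k + 1)) Filter.atTop (nhds 0) :=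
        h1.comp hφ.tendsto_atTop
      have h3 : Filter.Tendsto (fun k : ℕ => ε₀ * ((1:ℝ) / (φ k + 1)) * dot e p)
          Filter.atTop (nhds (ε₀ * 0 * dot e p)) :=
        (h2.const_mul ε₀).mul_const (dot e p)
      have h4 : (fun k : ℕ => A₀ + ε₀ * ((1:ℝ) / (φ k + 1)) * dot e p)
          = fun k : ℕ => A₀ + ε (φ k) * dot e p := by
        funext k
        rw [hεdef]
        ring
      have h5 := h3.const_add A₀
      rw [h4] at h5
      simpa using h5
    have hle : dot A z₀ ≤ A₀ := by
      apply le_of_tendsto_of_tendsto' htendA hεtend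
      intro k
      have h1 : dot A (z (φ k)) ≤ dot (Aε (φ k)) (z (φ k)) := by
        rw [hAεval]
        have := hepos (z (φ k)) (hzQ (φ k))
        nlinarith [hεpos (φ k)]
      linarith [hMle (φ k)]
    exact ⟨z₀, hz₀mem.1, le_antisymm hle (hAvalid z₀ hz₀Q)⟩

lemma st14_dot_sub_left (a b x : Fin n → ℝ) : dot (a - b) x = dot a x - dot b x := by
  simp [dot, sub_mul, Finset.sum_sub_distrib]

/-- The intermediate-value argument combining two one-sided tight coercive inequalities. -/
lemma st14_ivt (Q S T : Set (Fin n → ℝ))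
    (hSclosed : IsClosed S) (hTclosed : IsClosed T)
    (hSQ : S ⊆ Q) (hTQ : T ⊆ Q)
    (HS : ∀ x ∈ Q, ∃ a ∈ S, ∃ b ∈ T, ∃ θ : ℝ, 0 ≤ θ ∧ θ ≤ 1 ∧ x = θ • a + (1 - θ) • b)
    (u : Fin n → ℝ)
    (A B : Fin n → ℝ) (A₀ B₀ cA cB ηA ηB : ℝ) (hηA : 0 < ηA) (hηB : 0 < ηB)
    (hAvalid : ∀ x ∈ Q, A₀ ≤ dot A x) (hAco : ∀ x ∈ Q, cA + ηA * ‖x‖ ≤ dot A x)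
    (x₂ : Fin n → ℝ) (hx₂T : x₂ ∈ T) (hx₂ : dot A x₂ = A₀) (hAsep : dot A u < A₀)
    (hBvalid : ∀ x ∈ Q, B₀ ≤ dot B x) (hBco : ∀ x ∈ Q, cB + ηB * ‖x‖ ≤ dot B x)
    (x₁ : Fin n → ℝ) (hx₁S : x₁ ∈ S) (hx₁ : dot B x₁ = B₀) (hBsep : dot B u < B₀) :
    ∃ (μ : Fin n → ℝ) (μ₀ : ℝ),
      (∀ x ∈ Q, μ₀ ≤ dot μ x) ∧ dot μ u < μ₀ ∧
      (∃ y ∈ S, dot μ y = μ₀) ∧ (∃ y ∈ T, dot μ y = μ₀) := by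
  classical
  set η := min ηA ηB with hη
  have hηpos : 0 < η := lt_min hηA hηB
  set cm := min cA cB with hcm
  set ν : ℝ → (Fin n → ℝ) := fun t => (1 - t) • A + t • B with hν
  have hνdot : ∀ t x, dot (ν t) x = (1 - t) * dot A x + t * dot B x := by
    intro t x
    rw [hν]
    simp only
    rw [st14_dot_add_left, st14_dot_smul_left, st14_dot_smul_left]
  have hνco : ∀ t ∈ Icc (0:ℝ) 1, ∀ x ∈ Q, cm + η * ‖x‖ ≤ dot (ν t) x := by
    intro t ht x hx
    rw [hνdot]
    have h1 := hAco x hx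
    have h2 := hBco x hx
    have h3 : (1 - t) * (cA + ηA * ‖x‖) ≤ (1 - t) * dot A x := by
      apply mul_le_mul_of_nonneg_left h1 (by linarith [ht.2])
    have h4 : t * (cB + ηB * ‖x‖) ≤ t * dot B x := by
      apply mul_le_mul_of_nonneg_left h2 ht.1
    have h5 : cm ≤ cA := min_le_left _ _
    have h6 : cm ≤ cB := min_le_right _ _
    have h7 : η ≤ ηA := min_le_left _ _
    have h8 : η ≤ ηB := min_le_right _ _
    have h9 : 0 ≤ ‖x‖ := norm_nonneg x
    have key : cm + η * ‖x‖ = (1-t)*(cm + η*‖x‖) + t*(cm + η*‖x‖) := by ring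
    have q1 : (1-t)*(cm + η*‖x‖) ≤ (1-t)*(cA + ηA*‖x‖) :=
      mul_le_mul_of_nonneg_left (by nlinarith) (by linarith [ht.2])
    have q2 : t*(cm + η*‖x‖) ≤ t*(cB + ηB*‖x‖) :=
      mul_le_mul_of_nonneg_left (by nlinarith) ht.1
    linarith [q1.trans h3, q2.trans h4]
  have hνvalid : ∀ t ∈ Icc (0:ℝ) 1, ∀ x ∈ Q, (1 - t) * A₀ + t * B₀ ≤ dot (ν t) x := by
    intro t ht x hx
    rw [hνdot]
    have h1 := hAvalid x hx
    have h2 := hBvalid x hx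
    nlinarith [ht.1, ht.2]
  -- minimizers over S and T
  have hminS : ∀ t : ℝ, ∃ zz : Fin n → ℝ,
      t ∈ Icc (0:ℝ) 1 → zz ∈ S ∧ ∀ x ∈ S, dot (ν t) zz ≤ dot (ν t) x := by
    intro t
    by_cases ht : t ∈ Icc (0:ℝ) 1
    · obtain ⟨z, hz, hzmin⟩ := st14_exists_min S hSclosed x₁ hx₁S (ν t) cm η hηpos
        (fun x hx => hνco t ht x (hSQ hx))
      exact ⟨z, fun _ => ⟨hz, hzmin⟩⟩
    · exact ⟨0, fun h => absurd h ht⟩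
  have hminT : ∀ t : ℝ, ∃ zz : Fin n → ℝ,
      t ∈ Icc (0:ℝ) 1 → zz ∈ T ∧ ∀ x ∈ T, dot (ν t) zz ≤ dot (ν t) x := by
    intro t
    by_cases ht : t ∈ Icc (0:ℝ) 1
    · obtain ⟨z, hz, hzmin⟩ := st14_exists_min T hTclosed x₂ hx₂T (ν t) cm η hηpos
        (fun x hx => hνco t ht x (hTQ hx))
      exact ⟨z, fun _ => ⟨hz, hzmin⟩⟩
    · exact ⟨0, fun h => absurd h ht⟩
  choose zS hzS using hminS
  choose zT hzT using hminT
  set fS : ℝ → ℝ := fun t => dot (ν t) (zS t) with hfS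
  set fT : ℝ → ℝ := fun t => dot (ν t) (zT t) with hfT
  -- uniform bounds
  set M := max (max (dot A x₁) (dot B x₁)) (max (dot A x₂) (dot B x₂)) with hM
  have hfSle : ∀ t ∈ Icc (0:ℝ) 1, fS t ≤ M := by
    intro t ht
    have h1 := (hzS t ht).2 x₁ hx₁S
    have h2 : dot (ν t) x₁ ≤ max (dot A x₁) (dot B x₁) := by
      rw [hνdot]
      exact st14_combo_le_max ht.1 ht.2
    exact le_trans (le_trans h1 h2) (le_max_left _ _)
  have hfTle : ∀ t ∈ Icc (0:ℝ) 1, fT t ≤ M := by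
    intro t ht
    have h1 := (hzT t ht).2 x₂ hx₂T
    have h2 : dot (ν t) x₂ ≤ max (dot A x₂) (dot B x₂) := by
      rw [hνdot]
      exact st14_combo_le_max ht.1 ht.2
    exact le_trans (le_trans h1 h2) (le_max_right _ _)
  set R := (M - cm) / η with hR
  have hzSnorm : ∀ t ∈ Icc (0:ℝ) 1, ‖zS t‖ ≤ R := by
    intro t ht
    have h1 := hνco t ht (zS t) (hSQ (hzS t ht).1)
    have h2 := hfSle t ht
    rw [hR, le_div_iff₀ hηpos]
    have : fS t = dot (ν t) (zS t) := rfl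
    nlinarith [mul_comm η ‖zS t‖]
  have hzTnorm : ∀ t ∈ Icc (0:ℝ) 1, ‖zT t‖ ≤ R := by
    intro t ht
    have h1 := hνco t ht (zT t) (hTQ (hzT t ht).1)
    have h2 := hfTle t ht
    rw [hR, le_div_iff₀ hηpos]
    nlinarith [mul_comm η ‖zT t‖]
  have hRnonneg : 0 ≤ R := le_trans (norm_nonneg (zS 0)) (hzSnorm 0 ⟨le_refl 0, zero_le_one⟩)
  set N := ∑ i, |(B - A) i| with hN
  have hNnonneg : 0 ≤ N := Finset.sum_nonneg (fun i _ => abs_nonneg _)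
  set L := N * R with hL
  have hLnonneg : 0 ≤ L := mul_nonneg hNnonneg hRnonneg
  have hdiff : ∀ t s : ℝ, ∀ y : Fin n → ℝ,
      dot (ν t) y = dot (ν s) y + (t - s) * (dot B y - dot A y) := by
    intro t s y
    rw [hνdot, hνdot]
    ring
  have hdotBA : ∀ y : Fin n → ℝ, ‖y‖ ≤ R → |dot B y - dot A y| ≤ L := by
    intro y hy
    have h1 : dot B y - dot A y = dot (B - A) y := (st14_dot_sub_left B A y).symm
    rw [h1, hL]
    refine le_trans (st14_dot_bound (B - A) y) ?_
    exact mul_le_mul_of_nonneg_left hy hNnonneg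
  have hlip : ∀ f : ℝ → ℝ, ∀ zf : ℝ → (Fin n → ℝ),
      (∀ t, f t = dot (ν t) (zf t)) →
      (∀ t ∈ Icc (0:ℝ) 1, ‖zf t‖ ≤ R) →
      (∀ t ∈ Icc (0:ℝ) 1, ∀ s ∈ Icc (0:ℝ) 1, f t ≤ dot (ν t) (zf s)) →
      ∀ t ∈ Icc (0:ℝ) 1, ∀ s ∈ Icc (0:ℝ) 1, f t - f s ≤ |t - s| * L := by
    intro f zf hfdef hznorm hfmin t ht s hs
    have h1 : f t ≤ dot (ν t) (zf s) := hfmin t ht s hs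
    have h2 : dot (ν t) (zf s) = dot (ν s) (zf s) + (t - s) * (dot B (zf s) - dot A (zf s)) :=
      hdiff t s (zf s)
    have h3 : (t - s) * (dot B (zf s) - dot A (zf s)) ≤ |t - s| * L := by
      have h4 := hdotBA (zf s) (hznorm s hs)
      have h5 : (t - s) * (dot B (zf s) - dot A (zf s))
          ≤ |(t - s) * (dot B (zf s) - dot A (zf s))| := le_abs_self _
      rw [abs_mul] at h5
      have h6 : |t - s| * |dot B (zf s) - dot A (zf s)| ≤ |t - s| * L :=
        mul_le_mul_of_nonneg_left h4 (abs_nonneg _)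
      linarith
    rw [← hfdef s] at h2
    linarith
  have hfSlip : ∀ t ∈ Icc (0:ℝ) 1, ∀ s ∈ Icc (0:ℝ) 1, |fS t - fS s| ≤ L * |t - s| := by
    intro t ht s hs
    have h1 := hlip fS zS (fun _ => rfl) hzSnorm
      (fun t' ht' s' hs' => (hzS t' ht').2 (zS s') (hzS s' hs').1) t ht s hs
    have h2 := hlip fS zS (fun _ => rfl) hzSnorm
      (fun t' ht' s' hs' => (hzS t' ht').2 (zS s') (hzS s' hs').1) s hs t ht
    rw [abs_sub_comm s t] at h2
    rw [abs_le]
    constructor <;> nlinarith [abs_nonneg (t - s), mul_comm L |t - s|]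
  have hfTlip : ∀ t ∈ Icc (0:ℝ) 1, ∀ s ∈ Icc (0:ℝ) 1, |fT t - fT s| ≤ L * |t - s| := by
    intro t ht s hs
    have h1 := hlip fT zT (fun _ => rfl) hzTnorm
      (fun t' ht' s' hs' => (hzT t' ht').2 (zT s') (hzT s' hs').1) t ht s hs
    have h2 := hlip fT zT (fun _ => rfl) hzTnorm
      (fun t' ht' s' hs' => (hzT t' ht').2 (zT s') (hzT s' hs').1) s hs t ht
    rw [abs_sub_comm s t] at h2
    rw [abs_le]
    constructor <;> nlinarith [abs_nonneg (t - s), mul_comm L |t - s|]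
  have hfScont : ContinuousOn fS (Icc (0:ℝ) 1) := by
    apply LipschitzOnWith.continuousOn (K := L.toNNReal)
    apply lipschitzOnWith_iff_dist_le_mul.mpr
    intro x hx y hy
    rw [Real.dist_eq, Real.dist_eq, Real.coe_toNNReal L hLnonneg]
    exact hfSlip x hx y hy
  have hfTcont : ContinuousOn fT (Icc (0:ℝ) 1) := by
    apply LipschitzOnWith.continuousOn (K := L.toNNReal)
    apply lipschitzOnWith_iff_dist_le_mul.mpr
    intro x hx y hy
    rw [Real.dist_eq, Real.dist_eq, Real.coe_toNNReal L hLnonneg]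
    exact hfTlip x hx y hy
  set g : ℝ → ℝ := fun t => fS t - fT t with hg
  have hgcont : ContinuousOn g (Icc (0:ℝ) 1) := hfScont.sub hfTcont
  have h0Icc : (0:ℝ) ∈ Icc (0:ℝ) 1 := ⟨le_refl 0, zero_le_one⟩
  have h1Icc : (1:ℝ) ∈ Icc (0:ℝ) 1 := ⟨zero_le_one, le_refl 1⟩
  have hν0 : ∀ x, dot (ν 0) x = dot A x := by intro x; rw [hνdot]; ring
  have hν1 : ∀ x, dot (ν 1) x = dot B x := by intro x; rw [hνdot]; ring
  have hfT0 : fT 0 = A₀ := by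
    apply le_antisymm
    · have := (hzT 0 h0Icc).2 x₂ hx₂T
      rw [hν0 x₂, hx₂] at this
      exact this
    · have := hAvalid (zT 0) (hTQ (hzT 0 h0Icc).1)
      rw [hfT, ← hν0 (zT 0)] at *
      exact this
  have hfS1 : fS 1 = B₀ := by
    apply le_antisymm
    · have := (hzS 1 h1Icc).2 x₁ hx₁S
      rw [hν1 x₁, hx₁] at this
      exact this
    · have := hBvalid (zS 1) (hSQ (hzS 1 h1Icc).1)
      rw [hfS, ← hν1 (zS 1)] at *
      exact this
  have hg0 : 0 ≤ g 0 := by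
    rw [hg]
    simp only
    rw [hfT0]
    have := hAvalid (zS 0) (hSQ (hzS 0 h0Icc).1)
    rw [hfS, ← hν0 (zS 0)] at *
    linarith
  have hg1 : g 1 ≤ 0 := by
    rw [hg]
    simp only
    rw [hfS1]
    have := hBvalid (zT 1) (hTQ (hzT 1 h1Icc).1)
    rw [hfT, ← hν1 (zT 1)] at *
    linarith
  have h0mem : (0:ℝ) ∈ Icc (g 1) (g 0) := ⟨hg1, hg0⟩
  obtain ⟨t₀, ht₀Icc, hgt₀⟩ := intermediate_value_Icc' zero_le_one hgcont h0mem
  have hfeq : fS t₀ = fT t₀ := by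
    have : fS t₀ - fT t₀ = 0 := hgt₀
    linarith
  refine ⟨ν t₀, fS t₀, ?_, ?_, ?_, ?_⟩
  · intro x hx
    obtain ⟨a, ha, b, hb, θ, hθ0, hθ1, hxeq⟩ := HS x hx
    have h1 : fS t₀ ≤ dot (ν t₀) a := (hzS t₀ ht₀Icc).2 a ha
    have h2 : fS t₀ ≤ dot (ν t₀) b := by
      rw [hfeq]
      exact (hzT t₀ ht₀Icc).2 b hb
    have h3 : dot (ν t₀) x = θ * dot (ν t₀) a + (1 - θ) * dot (ν t₀) b := by
      rw [hxeq, st14_dot_add_right, st14_dot_smul_right, st14_dot_smul_right]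
    rw [h3]
    nlinarith
  · have h1 : dot (ν t₀) u = (1 - t₀) * dot A u + t₀ * dot B u := hνdot t₀ u
    have h2 : (1 - t₀) * dot A u + t₀ * dot B u < (1 - t₀) * A₀ + t₀ * B₀ :=
      st14_combo_lt' ht₀Icc.1 ht₀Icc.2 hAsep hBsep
    have h3 : (1 - t₀) * A₀ + t₀ * B₀ ≤ fS t₀ :=
      hνvalid t₀ ht₀Icc (zS t₀) (hSQ (hzS t₀ ht₀Icc).1)
    rw [h1]
    linarith
  · exact ⟨zS t₀, (hzS t₀ ht₀Icc).1, rfl⟩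
  · exact ⟨zT t₀, (hzT t₀ ht₀Icc).1, hfeq.symm⟩

/-- Decomposition of the convex hull of a union of two convex sets. -/
lemma st14_hull (C₁ C₂ : Set (Fin n → ℝ)) (h1 : Convex ℝ C₁) (h2 : Convex ℝ C₂)
    (hne1 : C₁.Nonempty) (hne2 : C₂.Nonempty) :
    ∀ x ∈ convexHull ℝ (C₁ ∪ C₂), ∃ a ∈ C₁, ∃ b ∈ C₂, ∃ θ : ℝ,
      0 ≤ θ ∧ θ ≤ 1 ∧ x = θ • a + (1 - θ) • b := by
  intro x hx
  rw [convexHull_union hne1 hne2, h1.convexHull_eq, h2.convexHull_eq, mem_convexJoin] at hx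
  obtain ⟨a, ha, b, hb, hseg⟩ := hx
  obtain ⟨θa, θb, h0a, h0b, hsum, heq⟩ := hseg
  refine ⟨a, ha, b, hb, θa, h0a, by linarith, ?_⟩
  rw [show (1:ℝ) - θa = θb by linarith, ← heq]

end Helpers

theorem stmt_14 {n : ℕ} (K : Set (Fin n → ℝ))
    (hKclosed : IsClosed K) (hKconv : Convex ℝ K)
    (hKcone : ∀ x ∈ K, ∀ t : ℝ, 0 ≤ t → t • x ∈ K)
    (hKpointed : ∀ x, x ∈ K → -x ∈ K → x = 0)
    (hKfull : (interior K).Nonempty)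
    (c₁ c₂ : Fin n → ℝ) (c₁₀ c₂₀ : ℝ)
    (hc₁₀ : c₁₀ = 0 ∨ c₁₀ = 1 ∨ c₁₀ = -1)
    (hc₂₀ : c₂₀ = 0 ∨ c₂₀ = 1 ∨ c₂₀ = -1)
    (C₁ C₂ : Set (Fin n → ℝ))
    (hC₁ : C₁ = {x ∈ K | c₁₀ ≤ dot c₁ x})
    (hC₂ : C₂ = {x ∈ K | c₂₀ ≤ dot c₂ x})
    (h12 : ¬ C₁ ⊆ C₂) (h21 : ¬ C₂ ⊆ C₁)
    (hsf₁ : (C₁ ∩ interior K).Nonempty)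
    (hsf₂ : (C₂ ∩ interior K).Nonempty)
    (hclosed : IsClosed (convexHull ℝ (C₁ ∪ C₂)))
    (hneK : convexHull ℝ (C₁ ∪ C₂) ≠ K) :
    ∀ u ∈ K \ convexHull ℝ (C₁ ∪ C₂),
      ∃ (μ : Fin n → ℝ) (μ₀ : ℝ),
        (∀ x ∈ convexHull ℝ (C₁ ∪ C₂), μ₀ ≤ dot μ x) ∧
        dot μ u < μ₀ ∧
        (∃ x₁ ∈ C₁, dot μ x₁ = μ₀) ∧ (∃ x₂ ∈ C₂, dot μ x₂ = μ₀) := by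
  classical
  intro u hu
  obtain ⟨huK, huQ⟩ := hu
  set Q := convexHull ℝ (C₁ ∪ C₂) with hQdef
  -- basic facts
  have hC₁K : C₁ ⊆ K := by rw [hC₁]; exact fun x hx => hx.1
  have hC₂K : C₂ ⊆ K := by rw [hC₂]; exact fun x hx => hx.1
  have hQK : Q ⊆ K := convexHull_min (union_subset hC₁K hC₂K) hKconv
  have hC₁conv : Convex ℝ C₁ := by
    rw [hC₁]
    exact hKconv.inter (convex_halfSpace_ge
      (IsLinearMap.mk (st14_dot_add_right c₁) (fun r x => st14_dot_smul_right r c₁ x)) c₁₀)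
  have hC₂conv : Convex ℝ C₂ := by
    rw [hC₂]
    exact hKconv.inter (convex_halfSpace_ge
      (IsLinearMap.mk (st14_dot_add_right c₂) (fun r x => st14_dot_smul_right r c₂ x)) c₂₀)
  have hC₁closed : IsClosed C₁ := by
    rw [hC₁]
    exact hKclosed.inter (isClosed_le continuous_const (st14_dotL c₁).continuous)
  have hC₂closed : IsClosed C₂ := by
    rw [hC₂]
    exact hKclosed.inter (isClosed_le continuous_const (st14_dotL c₂).continuous)
  have hC₁ne : C₁.Nonempty := ⟨hsf₁.choose, hsf₁.choose_spec.1⟩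
  have hC₂ne : C₂.Nonempty := ⟨hsf₂.choose, hsf₂.choose_spec.1⟩
  have hC₁Q : C₁ ⊆ Q := fun x hx => subset_convexHull ℝ _ (Or.inl hx)
  have hC₂Q : C₂ ⊆ Q := fun x hx => subset_convexHull ℝ _ (Or.inr hx)
  have hQconv : Convex ℝ Q := convex_convexHull ℝ _
  have hQclosed : IsClosed Q := hclosed
  have HS := st14_hull C₁ C₂ hC₁conv hC₂conv hC₁ne hC₂ne
  -- u is outside both pieces
  have huC₁ : u ∉ C₁ := fun h => huQ (hC₁Q h)
  have huC₂ : u ∉ C₂ := fun h => huQ (hC₂Q h)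
  have hc₁u : dot c₁ u < c₁₀ := by
    by_contra h
    push_neg at h
    exact huC₁ (by rw [hC₁]; exact ⟨huK, h⟩)
  have hc₂u : dot c₂ u < c₂₀ := by
    by_contra h
    push_neg at h
    exact huC₂ (by rw [hC₂]; exact ⟨huK, h⟩)
  -- the cᵢ are nonzero
  have hdzero : ∀ x : Fin n → ℝ, dot (0 : Fin n → ℝ) x = 0 := by
    intro x; simp [dot]
  have hc₁ne : c₁ ≠ 0 := by
    intro h
    obtain ⟨x, hx⟩ := hC₁ne
    rw [hC₁] at hx
    have h2 := hx.2
    rw [h, hdzero x] at h2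
    rw [h, hdzero u] at hc₁u
    linarith
  have hc₂ne : c₂ ≠ 0 := by
    intro h
    obtain ⟨x, hx⟩ := hC₂ne
    rw [hC₂] at hx
    have h2 := hx.2
    rw [h, hdzero x] at h2
    rw [h, hdzero u] at hc₂u
    linarith
  -- coercive functional
  obtain ⟨e, δ, hδ, he⟩ := st14_exists_e K hKclosed hKconv hKcone hKpointed
    ⟨hKfull.choose, interior_subset hKfull.choose_spec⟩
  -- interior points of each piece avoiding the other
  obtain ⟨bb, hbbC₂, hbbnC₁⟩ := not_subset.mp h21
  have hbbK : bb ∈ K := hC₂K hbbC₂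
  have hbbc₂ : c₂₀ ≤ dot c₂ bb := by rw [hC₂] at hbbC₂; exact hbbC₂.2
  have hbbc₁ : dot c₁ bb < c₁₀ := by
    by_contra h
    push_neg at h
    exact hbbnC₁ (by rw [hC₁]; exact ⟨hbbK, h⟩)
  obtain ⟨a₂, ha₂C₂, ha₂int⟩ := hsf₂
  have ha₂c : c₂₀ ≤ dot c₂ a₂ := by
    rw [hC₂] at ha₂C₂
    exact ha₂C₂.2
  obtain ⟨p₂, hp₂int, hp₂c₂, hp₂c₁⟩ := st14_mix K hKconv hKclosed c₂ c₁ c₂₀ c₁₀ hc₂ne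
    a₂ ha₂int ha₂c bb hbbK hbbc₂ hbbc₁
  obtain ⟨aa, haaC₁, haanC₂⟩ := not_subset.mp h12
  have haaK : aa ∈ K := hC₁K haaC₁
  have haac₁ : c₁₀ ≤ dot c₁ aa := by rw [hC₁] at haaC₁; exact haaC₁.2
  have haac₂ : dot c₂ aa < c₂₀ := by
    by_contra h
    push_neg at h
    exact haanC₂ (by rw [hC₂]; exact ⟨haaK, h⟩)
  obtain ⟨a₁, ha₁C₁, ha₁int⟩ := hsf₁
  have ha₁c : c₁₀ ≤ dot c₁ a₁ := by
    rw [hC₁] at ha₁C₁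
    exact ha₁C₁.2
  obtain ⟨p₁, hp₁int, hp₁c₁, hp₁c₂⟩ := st14_mix K hKconv hKclosed c₁ c₂ c₁₀ c₂₀ hc₁ne
    a₁ ha₁int ha₁c aa haaK haac₁ haac₂
  -- p₂ ∈ interior Q
  have hp₂Qint : p₂ ∈ interior Q := by
    have hU : interior K ∩ {x | c₂₀ < dot c₂ x} ⊆ Q := by
      intro x hx
      apply hC₂Q
      rw [hC₂]
      exact ⟨interior_subset hx.1, le_of_lt hx.2⟩
    have hUopen : IsOpen (interior K ∩ {x | c₂₀ < dot c₂ x}) :=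
      isOpen_interior.inter (isOpen_lt continuous_const (st14_dotL c₂).continuous)
    exact interior_maximal hU hUopen ⟨hp₂int, hp₂c₂⟩
  have hp₁Qint : p₁ ∈ interior Q := by
    have hU : interior K ∩ {x | c₁₀ < dot c₁ x} ⊆ Q := by
      intro x hx
      apply hC₁Q
      rw [hC₁]
      exact ⟨interior_subset hx.1, le_of_lt hx.2⟩
    have hUopen : IsOpen (interior K ∩ {x | c₁₀ < dot c₁ x}) :=
      isOpen_interior.inter (isOpen_lt continuous_const (st14_dotL c₁).continuous)
    exact interior_maximal hU hUopen ⟨hp₁int, hp₁c₁⟩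
  -- entry towards p₂ : gives a C₂-tight inequality
  obtain ⟨w, w₀, q, s, hqQ, hwvalid, hwtight, hwsep, hs0, hs1, hqeq⟩ :=
    st14_entry Q hQconv hQclosed u p₂ huQ hp₂Qint
  have hqc₁ : dot c₁ q < c₁₀ := by
    have h1 : dot c₁ q = (1 - s) * dot c₁ u + s * dot c₁ p₂ := by
      rw [hqeq, st14_dot_add_right, st14_dot_smul_right, st14_dot_smul_right]
    rw [h1]
    exact st14_combo_lt hs0 hs1 hc₁u hp₂c₁
  have hqnC₁ : q ∉ C₁ := by
    rw [hC₁]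
    intro h
    linarith [h.2]
  obtain ⟨a, haC₁, b, hbC₂, θ, hθ0, hθ1, hqdec⟩ := HS q hqQ
  have hθlt : θ < 1 := by
    rcases eq_or_lt_of_le hθ1 with h | h
    · exfalso
      apply hqnC₁
      rw [h] at hqdec
      simp at hqdec
      rw [hqdec]
      exact haC₁
    · exact h
  have hbtight : dot w b = w₀ := by
    have hsplit : θ * dot w a + (1 - θ) * dot w b = w₀ := by
      rw [← hwtight]
      conv_rhs => rw [hqdec]
      rw [st14_dot_add_right, st14_dot_smul_right, st14_dot_smul_right]
    exact st14_tight_of_combo hθ0 hθlt (hwvalid a (hC₁Q haC₁)) (hwvalid b (hC₂Q hbC₂)) hsplit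
  -- coercify towards C₂
  rcases st14_coercify Q C₁ C₂ K hQK hQclosed hC₁closed hC₁Q hC₂Q HS e δ hδ he u huK
      w w₀ b hwvalid (hC₂Q hbC₂) hbC₂ hbtight hwsep with
    ⟨x₁, hx₁C₁, hx₁tight⟩ | ⟨A', A₀', cA, ηA, xT, hηA, hA'valid, hA'co, hxTC₂, hxTtight, hA'sep⟩
  · exact ⟨w, w₀, hwvalid, hwsep, ⟨x₁, hx₁C₁, hx₁tight⟩, ⟨b, hbC₂, hbtight⟩⟩
  -- entry towards p₁ : gives a C₁-tight inequality
  obtain ⟨w', w₀', q', s', hq'Q, hw'valid, hw'tight, hw'sep, hs'0, hs'1, hq'eq⟩ :=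
    st14_entry Q hQconv hQclosed u p₁ huQ hp₁Qint
  have hq'c₂ : dot c₂ q' < c₂₀ := by
    have h1 : dot c₂ q' = (1 - s') * dot c₂ u + s' * dot c₂ p₁ := by
      rw [hq'eq, st14_dot_add_right, st14_dot_smul_right, st14_dot_smul_right]
    rw [h1]
    exact st14_combo_lt hs'0 hs'1 hc₂u hp₁c₂
  have hq'nC₂ : q' ∉ C₂ := by
    rw [hC₂]
    intro h
    linarith [h.2]
  obtain ⟨a', ha'C₁, b', hb'C₂, θ', hθ'0, hθ'1, hq'dec⟩ := HS q' hq'Q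
  have hθ'pos : 0 < θ' := by
    rcases eq_or_lt_of_le hθ'0 with h | h
    · exfalso
      apply hq'nC₂
      rw [← h] at hq'dec
      simp at hq'dec
      rw [hq'dec]
      exact hb'C₂
    · exact h
  have ha'tight : dot w' a' = w₀' := by
    have hsplit : (1 - θ') * dot w' b' + (1 - (1 - θ')) * dot w' a' = w₀' := by
      rw [← hw'tight]
      conv_rhs => rw [hq'dec]
      rw [st14_dot_add_right, st14_dot_smul_right, st14_dot_smul_right]
      ring
    exact st14_tight_of_combo (by linarith) (by linarith)
      (hw'valid b' (hC₂Q hb'C₂)) (hw'valid a' (hC₁Q ha'C₁)) hsplit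
  -- coercify towards C₁ (with the roles of C₁ and C₂ swapped)
  have HS' : ∀ x ∈ Q, ∃ a ∈ C₂, ∃ b ∈ C₁, ∃ θ : ℝ, 0 ≤ θ ∧ θ ≤ 1 ∧ x = θ • a + (1 - θ) • b := by
    intro x hx
    obtain ⟨a₁, ha₁, b₁, hb₁, θ₁, h0, h1, heq⟩ := HS x hx
    refine ⟨b₁, hb₁, a₁, ha₁, 1 - θ₁, by linarith, by linarith, ?_⟩
    rw [heq]
    module
  rcases st14_coercify Q C₂ C₁ K hQK hQclosed hC₂closed hC₂Q hC₁Q HS' e δ hδ he u huK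
      w' w₀' a' hw'valid (hC₁Q ha'C₁) ha'C₁ ha'tight hw'sep with
    ⟨x₂', hx₂'C₂, hx₂'tight⟩ | ⟨B', B₀', cB, ηB, xS, hηB, hB'valid, hB'co, hxSC₁, hxStight, hB'sep⟩
  · exact ⟨w', w₀', hw'valid, hw'sep, ⟨a', ha'C₁, ha'tight⟩, ⟨x₂', hx₂'C₂, hx₂'tight⟩⟩
  -- combine the two coercive one-sided tight inequalities
  exact st14_ivt Q C₁ C₂ hC₁closed hC₂closed hC₁Q hC₂Q HS u A' B' A₀' B₀' cA cB ηA ηB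
    hηA hηB hA'valid hA'co xT hxTC₂ hxTtight hA'sep hB'valid hB'co xS hxSC₁ hxStight hB'sep
end

section
/- Let S ⊂ ℝⁿ be a closed, convex, pointed set with recession cone rec S, and S₁ = {x ∈ S : c₁ᵀx ≥ c₁₀}, S₂ = {x ∈ S : c₂ᵀx ≥ c₂₀}, with S₁ ⊄ S₂, S₂ ⊄ S₁. If {r ∈ rec S : c₂ᵀr = 0} ⊆ {r ∈ rec S : c₁ᵀr ≥ 0} and {r ∈ rec S : c₁ᵀr = 0} ⊆ {r ∈ rec S : c₂ᵀr ≥ 0}, then conv(S₁ ∪ S₂) is closed. -/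
open Set

/-- Recession cone of a set `S ⊆ ℝⁿ`. -/
def recCone {n : ℕ} (S : Set (Fin n → ℝ)) : Set (Fin n → ℝ) :=
  {r | ∀ x ∈ S, ∀ t : ℝ, 0 ≤ t → x + t • r ∈ S}


open Filter Topology Bornology Metric

lemma dot_add {n : ℕ} (c x y : Fin n → ℝ) : dot c (x + y) = dot c x + dot c y := by
  simp [dot, mul_add, Finset.sum_add_distrib]

lemma dot_smul {n : ℕ} (c : Fin n → ℝ) (t : ℝ) (x : Fin n → ℝ) :
    dot c (t • x) = t * dot c x := by
  simp [dot, Finset.mul_sum, mul_left_comm]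

lemma dot_continuous {n : ℕ} (c : Fin n → ℝ) : Continuous (dot c) := by
  unfold dot
  exact continuous_finset_sum _ fun i _ => continuous_const.mul (continuous_apply i)

lemma dot_isLinearMap {n : ℕ} (c : Fin n → ℝ) : IsLinearMap ℝ (dot c) :=
  ⟨fun x y => dot_add c x y, fun t x => by simp [dot_smul, smul_eq_mul]⟩

lemma halfspace_closed {n : ℕ} {S : Set (Fin n → ℝ)} (hS : IsClosed S) (c : Fin n → ℝ) (γ : ℝ) :
    IsClosed {x ∈ S | γ ≤ dot c x} := by
  have : {x ∈ S | γ ≤ dot c x} = S ∩ {x | γ ≤ dot c x} := rfl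
  rw [this]
  exact hS.inter (isClosed_le continuous_const (dot_continuous c))

lemma halfspace_convex {n : ℕ} {S : Set (Fin n → ℝ)} (hS : Convex ℝ S) (c : Fin n → ℝ) (γ : ℝ) :
    Convex ℝ {x ∈ S | γ ≤ dot c x} := by
  have : {x ∈ S | γ ≤ dot c x} = S ∩ {x | γ ≤ dot c x} := rfl
  rw [this]
  exact hS.inter (convex_halfSpace_ge (dot_isLinearMap c) γ)

lemma recCone_of_escape {n : ℕ} {S : Set (Fin n → ℝ)} (hSclosed : IsClosed S)
    (hSconv : Convex ℝ S) {a : ℕ → Fin n → ℝ} (ha : ∀ k, a k ∈ S)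
    (hinf : Tendsto (fun k => ‖a k‖) atTop atTop)
    {d : Fin n → ℝ} (hd : Tendsto (fun k => ‖a k‖⁻¹ • a k) atTop (𝓝 d)) :
    d ∈ recCone S ∧ ‖d‖ = 1 := by
  have hev1 : ∀ᶠ k in atTop, (1:ℝ) ≤ ‖a k‖ := hinf.eventually_ge_atTop 1
  constructor
  · intro x hx t ht
    have hev : ∀ᶠ k in atTop, max t 1 ≤ ‖a k‖ := hinf.eventually_ge_atTop _
    have hμ : Tendsto (fun k => t * ‖a k‖⁻¹) atTop (𝓝 0) := by
      have h0 : Tendsto (fun k => ‖a k‖⁻¹) atTop (𝓝 0) := hinf.inv_tendsto_atTop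
      simpa using h0.const_mul t
    have h1 : Tendsto (fun k => (1 - t * ‖a k‖⁻¹) • x) atTop (𝓝 ((1:ℝ) • x)) := by
      have := (hμ.const_sub 1)
      simpa using this.smul_const x
    have h2 : Tendsto (fun k => t • (‖a k‖⁻¹ • a k)) atTop (𝓝 (t • d)) := hd.const_smul t
    have hw : Tendsto (fun k => (1 - t * ‖a k‖⁻¹) • x + t • (‖a k‖⁻¹ • a k)) atTop
        (𝓝 (x + t • d)) := by simpa using h1.add h2
    refine hSclosed.mem_of_tendsto hw (hev.mono fun k hk => ?_)
    have hpos : (0:ℝ) < ‖a k‖ := lt_of_lt_of_le (by simp [lt_max_iff]) hk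
    have hμ0 : 0 ≤ t * ‖a k‖⁻¹ := mul_nonneg ht (inv_nonneg.2 hpos.le)
    have hμ1 : t * ‖a k‖⁻¹ ≤ 1 := by
      rw [mul_inv_le_iff₀ hpos]
      simpa using le_trans (le_max_left t 1) hk
    have := hSconv hx (ha k) (show (0:ℝ) ≤ 1 - t * ‖a k‖⁻¹ by linarith) hμ0 (by ring)
    simpa [smul_smul] using this
  · have hnorm : Tendsto (fun k => ‖‖a k‖⁻¹ • a k‖) atTop (𝓝 ‖d‖) := hd.norm
    have heq : (fun k => ‖‖a k‖⁻¹ • a k‖) =ᶠ[atTop] fun _ => (1:ℝ) := by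
      filter_upwards [hev1] with k hk
      have hpos : (0:ℝ) < ‖a k‖ := lt_of_lt_of_le one_pos hk
      rw [norm_smul]
      simp [abs_of_pos (inv_pos.2 hpos), inv_mul_cancel₀ hpos.ne']
    have := hnorm.congr' heq
    exact (tendsto_nhds_unique this tendsto_const_nhds)

lemma scalar_dichotomy (r : ℕ → ℝ) :
    (∃ C, ∃ᶠ k in atTop, r k ≤ C) ∨ Tendsto r atTop atTop := by
  by_cases h : ∃ C, ∃ᶠ k in atTop, r k ≤ C
  · exact Or.inl h
  · push_neg at h
    refine Or.inr (tendsto_atTop.2 fun C => ?_)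
    have := h C
    exact this.mono fun k hk => hk.le

lemma vec_dichotomy {n : ℕ} (a : ℕ → Fin n → ℝ) :
    (∃ (L : Fin n → ℝ) (φ : ℕ → ℕ), StrictMono φ ∧ Tendsto (fun k => a (φ k)) atTop (𝓝 L)) ∨
      Tendsto (fun k => ‖a k‖) atTop atTop := by
  rcases scalar_dichotomy (fun k => ‖a k‖) with ⟨C, hC⟩ | h
  · obtain ⟨L, -, φ, hφ, hL⟩ := tendsto_subseq_of_frequently_bounded
      (isBounded_closedBall (x := (0 : Fin n → ℝ)) (r := C))
      (hC.mono fun k hk => by simpa [mem_closedBall, dist_eq_norm] using hk)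
    exact Or.inl ⟨L, φ, hφ, hL⟩
  · exact Or.inr h

lemma unit_dir_mem_ball {n : ℕ} (b : Fin n → ℝ) :
    ‖b‖⁻¹ • b ∈ closedBall (0 : Fin n → ℝ) 1 := by
  simp only [mem_closedBall, dist_eq_norm, sub_zero, norm_smul, norm_inv, norm_norm]
  rcases eq_or_ne ‖b‖ 0 with h0 | h0
  · simp [h0]
  · rw [inv_mul_cancel₀ h0]

lemma tail_mem {n : ℕ} {S : Set (Fin n → ℝ)} {c c' : Fin n → ℝ} {γ γ' : ℝ}
    (h : ∀ r ∈ recCone S, dot c' r = 0 → 0 ≤ dot c r)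
    {A d : Fin n → ℝ} (hA : A ∈ S) (hAc : γ ≤ dot c A) (hd : d ∈ recCone S)
    {t : ℝ} (ht : 0 ≤ t) (hc'd : 0 ≤ dot c' d)
    (hne : {x ∈ S | γ' ≤ dot c' x}.Nonempty) :
    A + t • d ∈ convexJoin ℝ {x ∈ S | γ ≤ dot c x} {x ∈ S | γ' ≤ dot c' x} := by
  rcases eq_or_lt_of_le hc'd with h0 | hpos
  · have hcd := h d hd h0.symm
    have hmem : A + t • d ∈ {x ∈ S | γ ≤ dot c x} := by
      refine ⟨hd A hA t ht, ?_⟩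
      rw [dot_add, dot_smul]
      nlinarith
    exact subset_convexJoin_left hne hmem
  · set s : ℝ := max t ((γ' - dot c' A) / dot c' d) + 1 with hs
    have hst : t < s := lt_of_le_of_lt (le_max_left _ _) (lt_add_one _)
    have hs0 : 0 < s := lt_of_le_of_lt ht hst
    have hB : A + s • d ∈ {x ∈ S | γ' ≤ dot c' x} := by
      refine ⟨hd A hA s hs0.le, ?_⟩
      rw [dot_add, dot_smul]
      have h2 : (γ' - dot c' A) / dot c' d ≤ s :=
        le_trans (le_max_right _ _) (le_of_lt (lt_add_one _))
      have h3 := (div_le_iff₀ hpos).mp h2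
      linarith
    refine mem_convexJoin.2 ⟨A, ⟨hA, hAc⟩, A + s • d, hB, ?_⟩
    refine ⟨1 - t / s, t / s, ?_, ?_, by ring, ?_⟩
    · have : t / s ≤ 1 := (div_le_one hs0).mpr hst.le
      linarith
    · positivity
    · rw [smul_add, smul_smul, div_mul_cancel₀ _ hs0.ne', ← add_assoc, ← add_smul]
      norm_num

lemma case_escape {n : ℕ} {S : Set (Fin n → ℝ)} (hSclosed : IsClosed S) (hSconv : Convex ℝ S)
    {c c' : Fin n → ℝ} {γ γ' : ℝ}
    (h : ∀ r ∈ recCone S, dot c' r = 0 → 0 ≤ dot c r)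
    {a b : ℕ → Fin n → ℝ} {μ ν : ℕ → ℝ}
    (haS : ∀ k, a k ∈ S) (hac : ∀ k, γ ≤ dot c (a k))
    (hbS : ∀ k, b k ∈ S) (hbc : ∀ k, γ' ≤ dot c' (b k))
    (hμ0 : ∀ k, 0 ≤ μ k) (hν0 : ∀ k, 0 ≤ ν k) (hμν : ∀ k, μ k + ν k = 1)
    {A z : Fin n → ℝ} (hA : Tendsto a atTop (𝓝 A))
    (hbinf : Tendsto (fun k => ‖b k‖) atTop atTop)
    (hz : Tendsto (fun k => μ k • a k + ν k • b k) atTop (𝓝 z)) :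
    z ∈ convexJoin ℝ {x ∈ S | γ ≤ dot c x} {x ∈ S | γ' ≤ dot c' x} := by
  -- extract a convergent subsequence of directions of `b`
  obtain ⟨d, -, φ, hφ, hdφ⟩ := tendsto_subseq_of_bounded
    (isBounded_closedBall (x := (0 : Fin n → ℝ)) (r := 1))
    (x := fun k => ‖b k‖⁻¹ • b k) (fun k => unit_dir_mem_ball (b k))
  -- extract a convergent subsequence of the coefficients
  obtain ⟨m, hm01, ψ, hψ, hμψ⟩ := (isCompact_Icc (a := (0:ℝ)) (b := 1)).tendsto_subseq
    (x := fun k => μ (φ k))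
    (fun k => ⟨hμ0 (φ k), by have := hν0 (φ k); have := hμν (φ k); linarith⟩)
  set ρ : ℕ → ℕ := φ ∘ ψ with hρdef
  have hρ : StrictMono ρ := hφ.comp hψ
  have hρt : Tendsto ρ atTop atTop := hρ.tendsto_atTop
  have hψt : Tendsto ψ atTop atTop := hψ.tendsto_atTop
  have haρ : Tendsto (fun k => a (ρ k)) atTop (𝓝 A) := hA.comp hρt
  have hdρ : Tendsto (fun k => ‖b (ρ k)‖⁻¹ • b (ρ k)) atTop (𝓝 d) := hdφ.comp hψt
  have hbinfρ : Tendsto (fun k => ‖b (ρ k)‖) atTop atTop := hbinf.comp hρt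
  have hzρ : Tendsto (fun k => μ (ρ k) • a (ρ k) + ν (ρ k) • b (ρ k)) atTop (𝓝 z) := hz.comp hρt
  have hμρ : Tendsto (fun k => μ (ρ k)) atTop (𝓝 m) := hμψ
  obtain ⟨hdrec, hdnorm⟩ := recCone_of_escape hSclosed hSconv (fun k => hbS (ρ k)) hbinfρ hdρ
  have hinv : Tendsto (fun k => ‖b (ρ k)‖⁻¹) atTop (𝓝 0) := hbinfρ.inv_tendsto_atTop
  have hev1 : ∀ᶠ k in atTop, (1:ℝ) ≤ ‖b (ρ k)‖ := hbinfρ.eventually_ge_atTop 1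
  -- `0 ≤ dot c' d`
  have hc'd : 0 ≤ dot c' d := by
    have hdot : Tendsto (fun k => dot c' (‖b (ρ k)‖⁻¹ • b (ρ k))) atTop (𝓝 (dot c' d)) :=
      ((dot_continuous c').tendsto d).comp hdρ
    have hlow : Tendsto (fun k => ‖b (ρ k)‖⁻¹ * γ') atTop (𝓝 0) := by
      simpa using hinv.mul_const γ'
    refine le_of_tendsto_of_tendsto hlow hdot ?_
    filter_upwards [hev1] with k hk
    have hpos : (0:ℝ) < ‖b (ρ k)‖ := lt_of_lt_of_le one_pos hk
    rw [dot_smul]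
    exact mul_le_mul_of_nonneg_left (hbc (ρ k)) (inv_nonneg.2 hpos.le)
  -- the `ν • b` part converges
  have hν : Tendsto (fun k => ν (ρ k) • b (ρ k)) atTop (𝓝 (z - m • A)) := by
    have := hzρ.sub (hμρ.smul haρ)
    refine this.congr fun k => ?_
    abel
  set v : Fin n → ℝ := z - m • A with hvdef
  have htν : Tendsto (fun k => ν (ρ k) * ‖b (ρ k)‖) atTop (𝓝 ‖v‖) := by
    refine hν.norm.congr fun k => ?_
    rw [norm_smul, Real.norm_eq_abs, abs_of_nonneg (hν0 (ρ k))]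
  -- identify v = ‖v‖ • d
  have hvd : v = ‖v‖ • d := by
    have hsm : Tendsto (fun k => (ν (ρ k) * ‖b (ρ k)‖) • (‖b (ρ k)‖⁻¹ • b (ρ k))) atTop
        (𝓝 (‖v‖ • d)) := htν.smul hdρ
    have heq : (fun k => (ν (ρ k) * ‖b (ρ k)‖) • (‖b (ρ k)‖⁻¹ • b (ρ k)))
        =ᶠ[atTop] fun k => ν (ρ k) • b (ρ k) := by
      filter_upwards [hev1] with k hk
      have hpos : (0:ℝ) < ‖b (ρ k)‖ := lt_of_lt_of_le one_pos hk
      rw [smul_smul, mul_assoc, mul_inv_cancel₀ hpos.ne', mul_one]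
    exact tendsto_nhds_unique hν (hsm.congr' heq)
  -- ν → 0, hence m = 1
  have hν0' : Tendsto (fun k => ν (ρ k)) atTop (𝓝 0) := by
    have h0 : Tendsto (fun k => (ν (ρ k) * ‖b (ρ k)‖) * ‖b (ρ k)‖⁻¹) atTop (𝓝 (‖v‖ * 0)) :=
      htν.mul hinv
    rw [mul_zero] at h0
    refine h0.congr' ?_
    filter_upwards [hev1] with k hk
    have hpos : (0:ℝ) < ‖b (ρ k)‖ := lt_of_lt_of_le one_pos hk
    rw [mul_assoc, mul_inv_cancel₀ hpos.ne', mul_one]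
  have hm1 : m = 1 := by
    have hμlim : Tendsto (fun k => μ (ρ k)) atTop (𝓝 1) := by
      have := hν0'.const_sub 1
      rw [sub_zero] at this
      refine this.congr fun k => ?_
      have := hμν (ρ k); linarith
    exact tendsto_nhds_unique hμρ hμlim
  have hzformula : z = A + ‖v‖ • d := by
    rw [← hvd, hvdef, hm1, one_smul]
    abel
  have hAmem : A ∈ {x ∈ S | γ ≤ dot c x} :=
    (halfspace_closed hSclosed c γ).mem_of_tendsto haρ
      (Eventually.of_forall fun k => ⟨haS (ρ k), hac (ρ k)⟩)
  rw [hzformula]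
  exact tail_mem h hAmem.1 hAmem.2 hdrec (norm_nonneg v) hc'd ⟨b 0, hbS 0, hbc 0⟩
lemma case_both_escape {n : ℕ} {S : Set (Fin n → ℝ)} (hSclosed : IsClosed S) (hSconv : Convex ℝ S)
    (hSpointed : ∀ r, r ∈ recCone S → -r ∈ recCone S → r = 0)
    {a b : ℕ → Fin n → ℝ} {μ ν : ℕ → ℝ}
    (haS : ∀ k, a k ∈ S) (hbS : ∀ k, b k ∈ S)
    (hμ0 : ∀ k, 0 ≤ μ k) (hν0 : ∀ k, 0 ≤ ν k) (hμν : ∀ k, μ k + ν k = 1)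
    {z : Fin n → ℝ}
    (hainf : Tendsto (fun k => ‖a k‖) atTop atTop)
    (hbinf : Tendsto (fun k => ‖b k‖) atTop atTop)
    (hz : Tendsto (fun k => μ k • a k + ν k • b k) atTop (𝓝 z)) : False := by
  obtain ⟨dA, -, φ₁, hφ₁, hdA₁⟩ := tendsto_subseq_of_bounded
    (isBounded_closedBall (x := (0 : Fin n → ℝ)) (r := 1))
    (x := fun k => ‖a k‖⁻¹ • a k) (fun k => unit_dir_mem_ball (a k))
  obtain ⟨dB, -, φ₂, hφ₂, hdBρ⟩ := tendsto_subseq_of_bounded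
    (isBounded_closedBall (x := (0 : Fin n → ℝ)) (r := 1))
    (x := fun k => ‖b (φ₁ k)‖⁻¹ • b (φ₁ k)) (fun k => unit_dir_mem_ball _)
  set ρ : ℕ → ℕ := φ₁ ∘ φ₂ with hρdef
  have hρ : StrictMono ρ := hφ₁.comp hφ₂
  have hρt : Tendsto ρ atTop atTop := hρ.tendsto_atTop
  have hφ₂t : Tendsto φ₂ atTop atTop := hφ₂.tendsto_atTop
  have hdAρ : Tendsto (fun k => ‖a (ρ k)‖⁻¹ • a (ρ k)) atTop (𝓝 dA) := hdA₁.comp hφ₂t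
  have hainfρ : Tendsto (fun k => ‖a (ρ k)‖) atTop atTop := hainf.comp hρt
  have hbinfρ : Tendsto (fun k => ‖b (ρ k)‖) atTop atTop := hbinf.comp hρt
  have hzρ : Tendsto (fun k => μ (ρ k) • a (ρ k) + ν (ρ k) • b (ρ k)) atTop (𝓝 z) := hz.comp hρt
  obtain ⟨hdArec, hdAnorm⟩ :=
    recCone_of_escape hSclosed hSconv (fun k => haS (ρ k)) hainfρ hdAρ
  obtain ⟨hdBrec, hdBnorm⟩ :=
    recCone_of_escape hSclosed hSconv (fun k => hbS (ρ k)) hbinfρ hdBρ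
  have hev1a : ∀ᶠ k in atTop, (1:ℝ) ≤ ‖a (ρ k)‖ := hainfρ.eventually_ge_atTop 1
  have hev1b : ∀ᶠ k in atTop, (1:ℝ) ≤ ‖b (ρ k)‖ := hbinfρ.eventually_ge_atTop 1
  set r : ℕ → ℝ := fun k => μ (ρ k) * ‖a (ρ k)‖ with hrdef
  set s : ℕ → ℝ := fun k => ν (ρ k) * ‖b (ρ k)‖ with hsdef
  have hr0 : ∀ k, 0 ≤ r k := fun k => mul_nonneg (hμ0 _) (norm_nonneg _)
  have hs0 : ∀ k, 0 ≤ s k := fun k => mul_nonneg (hν0 _) (norm_nonneg _)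
  rcases scalar_dichotomy r with ⟨C, hC⟩ | hrinf
  · -- `r` has a bounded subsequence: then μ → 0 and ν → 0, contradiction
    obtain ⟨rlim, -, φ₃, hφ₃, hr₃⟩ := tendsto_subseq_of_frequently_bounded
      (isBounded_Icc (a := (0:ℝ)) (b := C)) (x := r)
      (hC.mono fun k hk => ⟨hr0 k, hk⟩)
    have hφ₃t : Tendsto φ₃ atTop atTop := hφ₃.tendsto_atTop
    have hev1a' : ∀ᶠ k in atTop, (1:ℝ) ≤ ‖a (ρ (φ₃ k))‖ :=
      (hainfρ.comp hφ₃t).eventually_ge_atTop 1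
    have hev1b' : ∀ᶠ k in atTop, (1:ℝ) ≤ ‖b (ρ (φ₃ k))‖ :=
      (hbinfρ.comp hφ₃t).eventually_ge_atTop 1
    have hμa : Tendsto (fun k => μ (ρ (φ₃ k)) • a (ρ (φ₃ k))) atTop (𝓝 (rlim • dA)) := by
      have h0 : Tendsto (fun k => r (φ₃ k) • (‖a (ρ (φ₃ k))‖⁻¹ • a (ρ (φ₃ k)))) atTop
          (𝓝 (rlim • dA)) := hr₃.smul (hdAρ.comp hφ₃t)
      refine h0.congr' ?_
      filter_upwards [hev1a'] with k hk
      have hpos : (0:ℝ) < ‖a (ρ (φ₃ k))‖ := lt_of_lt_of_le one_pos hk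
      rw [smul_smul, hrdef, mul_assoc, mul_inv_cancel₀ hpos.ne', mul_one]
    have hνb : Tendsto (fun k => ν (ρ (φ₃ k)) • b (ρ (φ₃ k))) atTop (𝓝 (z - rlim • dA)) := by
      have := (hzρ.comp hφ₃t).sub hμa
      refine this.congr fun k => ?_
      simp only [Function.comp_apply]
      abel
    have hsν : Tendsto (fun k => s (φ₃ k)) atTop (𝓝 ‖z - rlim • dA‖) := by
      refine hνb.norm.congr fun k => ?_
      rw [norm_smul, Real.norm_eq_abs, abs_of_nonneg (hν0 _)]
    have hμ0' : Tendsto (fun k => μ (ρ (φ₃ k))) atTop (𝓝 0) := by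
      have h0 : Tendsto (fun k => r (φ₃ k) * ‖a (ρ (φ₃ k))‖⁻¹) atTop (𝓝 (rlim * 0)) :=
        hr₃.mul ((hainfρ.comp hφ₃t).inv_tendsto_atTop)
      rw [mul_zero] at h0
      refine h0.congr' ?_
      filter_upwards [hev1a'] with k hk
      have hpos : (0:ℝ) < ‖a (ρ (φ₃ k))‖ := lt_of_lt_of_le one_pos hk
      rw [hrdef, mul_assoc, mul_inv_cancel₀ hpos.ne', mul_one]
    have hν0' : Tendsto (fun k => ν (ρ (φ₃ k))) atTop (𝓝 0) := by
      have h0 : Tendsto (fun k => s (φ₃ k) * ‖b (ρ (φ₃ k))‖⁻¹) atTop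
          (𝓝 (‖z - rlim • dA‖ * 0)) := hsν.mul ((hbinfρ.comp hφ₃t).inv_tendsto_atTop)
      rw [mul_zero] at h0
      refine h0.congr' ?_
      filter_upwards [hev1b'] with k hk
      have hpos : (0:ℝ) < ‖b (ρ (φ₃ k))‖ := lt_of_lt_of_le one_pos hk
      rw [hsdef, mul_assoc, mul_inv_cancel₀ hpos.ne', mul_one]
    have hone : Tendsto (fun _ : ℕ => (1:ℝ)) atTop (𝓝 0) := by
      have := hμ0'.add hν0'
      rw [add_zero] at this
      refine this.congr fun k => hμν _
    have : (1:ℝ) = 0 := tendsto_nhds_unique tendsto_const_nhds hone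
    norm_num at this
  · -- `r → ∞`: the two directions are opposite, contradicting pointedness
    have hevr : ∀ᶠ k in atTop, (1:ℝ) ≤ r k := hrinf.eventually_ge_atTop 1
    have hinvr : Tendsto (fun k => (r k)⁻¹) atTop (𝓝 0) := hrinf.inv_tendsto_atTop
    have key : (fun k => (s k * (r k)⁻¹) • (‖b (ρ k)‖⁻¹ • b (ρ k))) =ᶠ[atTop]
        (fun k => (r k)⁻¹ • (μ (ρ k) • a (ρ k) + ν (ρ k) • b (ρ k))
          - ‖a (ρ k)‖⁻¹ • a (ρ k)) := by
      filter_upwards [hev1a, hev1b, hevr] with k h1a h1b h1r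
      have hapos : (0:ℝ) < ‖a (ρ k)‖ := lt_of_lt_of_le one_pos h1a
      have hbpos : (0:ℝ) < ‖b (ρ k)‖ := lt_of_lt_of_le one_pos h1b
      have hrpos : (0:ℝ) < r k := lt_of_lt_of_le one_pos h1r
      have hμpos : (0:ℝ) < μ (ρ k) := by
        rcases (hμ0 (ρ k)).lt_or_eq with hcase | hcase
        · exact hcase
        · exfalso
          have : r k = 0 := by rw [hrdef]; simp [← hcase]
          rw [this] at hrpos
          exact lt_irrefl 0 hrpos
      rw [smul_add, smul_smul, smul_smul, smul_smul]
      have e1 : (r k)⁻¹ * μ (ρ k) = ‖a (ρ k)‖⁻¹ := by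
        rw [hrdef]
        field_simp
      have e2 : s k * (r k)⁻¹ * ‖b (ρ k)‖⁻¹ = (r k)⁻¹ * ν (ρ k) := by
        rw [hsdef]
        field_simp
      rw [e1, e2]
      abel
    have hqdir : Tendsto (fun k => (s k * (r k)⁻¹) • (‖b (ρ k)‖⁻¹ • b (ρ k))) atTop
        (𝓝 (-dA)) := by
      have h0 : Tendsto (fun k => (r k)⁻¹ • (μ (ρ k) • a (ρ k) + ν (ρ k) • b (ρ k))
          - ‖a (ρ k)‖⁻¹ • a (ρ k)) atTop (𝓝 (0 - dA)) := by
        refine Tendsto.sub ?_ hdAρ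
        have := hinvr.smul hzρ
        simpa using this
      rw [zero_sub] at h0
      exact Tendsto.congr' key.symm h0
    have hq1 : Tendsto (fun k => s k * (r k)⁻¹) atTop (𝓝 1) := by
      have hn := hqdir.norm
      rw [norm_neg, hdAnorm] at hn
      refine hn.congr' ?_
      filter_upwards [hev1b, hevr] with k h1b h1r
      have hbpos : (0:ℝ) < ‖b (ρ k)‖ := lt_of_lt_of_le one_pos h1b
      have hq0 : 0 ≤ s k * (r k)⁻¹ :=
        mul_nonneg (hs0 k) (inv_nonneg.2 (by linarith))
      rw [norm_smul, norm_smul, norm_inv, norm_norm, inv_mul_cancel₀ hbpos.ne', mul_one,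
        Real.norm_eq_abs, abs_of_nonneg hq0]
    have hdBlim : Tendsto (fun k => (s k * (r k)⁻¹) • (‖b (ρ k)‖⁻¹ • b (ρ k))) atTop
        (𝓝 ((1:ℝ) • dB)) := hq1.smul hdBρ
    have huniq : -dA = dB := by
      have := tendsto_nhds_unique hqdir hdBlim
      rwa [one_smul] at this
    have hzero : dA = 0 := hSpointed dA hdArec (huniq ▸ hdBrec)
    rw [hzero] at hdAnorm
    simp at hdAnorm
lemma case_both_converge {n : ℕ} {S : Set (Fin n → ℝ)} (hSclosed : IsClosed S)
    {c c' : Fin n → ℝ} {γ γ' : ℝ}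
    {a b : ℕ → Fin n → ℝ} {μ ν : ℕ → ℝ}
    (haS : ∀ k, a k ∈ S) (hac : ∀ k, γ ≤ dot c (a k))
    (hbS : ∀ k, b k ∈ S) (hbc : ∀ k, γ' ≤ dot c' (b k))
    (hμ0 : ∀ k, 0 ≤ μ k) (hν0 : ∀ k, 0 ≤ ν k) (hμν : ∀ k, μ k + ν k = 1)
    {A B z : Fin n → ℝ} (hA : Tendsto a atTop (𝓝 A)) (hB : Tendsto b atTop (𝓝 B))
    (hz : Tendsto (fun k => μ k • a k + ν k • b k) atTop (𝓝 z)) :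
    z ∈ convexJoin ℝ {x ∈ S | γ ≤ dot c x} {x ∈ S | γ' ≤ dot c' x} := by
  obtain ⟨m, hm01, ψ, hψ, hμψ⟩ := (isCompact_Icc (a := (0:ℝ)) (b := 1)).tendsto_subseq
    (x := μ) (fun k => ⟨hμ0 k, by have := hν0 k; have := hμν k; linarith⟩)
  have hψt : Tendsto ψ atTop atTop := hψ.tendsto_atTop
  have hμψ' : Tendsto (fun k => μ (ψ k)) atTop (𝓝 m) := hμψ
  have hνψ : Tendsto (fun k => ν (ψ k)) atTop (𝓝 (1 - m)) := by
    have := hμψ'.const_sub 1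
    refine this.congr fun k => ?_
    have := hμν (ψ k); linarith
  have haψ : Tendsto (fun k => a (ψ k)) atTop (𝓝 A) := hA.comp hψt
  have hbψ : Tendsto (fun k => b (ψ k)) atTop (𝓝 B) := hB.comp hψt
  have hlim : Tendsto (fun k => μ (ψ k) • a (ψ k) + ν (ψ k) • b (ψ k)) atTop
      (𝓝 (m • A + (1 - m) • B)) := (hμψ'.smul haψ).add (hνψ.smul hbψ)
  have hz' : Tendsto (fun k => μ (ψ k) • a (ψ k) + ν (ψ k) • b (ψ k)) atTop (𝓝 z) :=
    hz.comp hψt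
  have hzeq : z = m • A + (1 - m) • B := tendsto_nhds_unique hz' hlim
  have hAmem : A ∈ {x ∈ S | γ ≤ dot c x} :=
    (halfspace_closed hSclosed c γ).mem_of_tendsto hA
      (Eventually.of_forall fun k => ⟨haS k, hac k⟩)
  have hBmem : B ∈ {x ∈ S | γ' ≤ dot c' x} :=
    (halfspace_closed hSclosed c' γ').mem_of_tendsto hB
      (Eventually.of_forall fun k => ⟨hbS k, hbc k⟩)
  exact mem_convexJoin.2 ⟨A, hAmem, B, hBmem, m, 1 - m, hm01.1,
    by linarith [hm01.2], by ring, hzeq.symm⟩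

theorem stmt_15 {n : ℕ} (S : Set (Fin n → ℝ))
    (hSclosed : IsClosed S) (hSconv : Convex ℝ S)
    (hSpointed : ∀ r, r ∈ recCone S → -r ∈ recCone S → r = 0)
    (c₁ c₂ : Fin n → ℝ) (c₁₀ c₂₀ : ℝ)
    (S₁ S₂ : Set (Fin n → ℝ))
    (hS₁ : S₁ = {x ∈ S | c₁₀ ≤ dot c₁ x})
    (hS₂ : S₂ = {x ∈ S | c₂₀ ≤ dot c₂ x})
    (h12 : ¬ S₁ ⊆ S₂) (h21 : ¬ S₂ ⊆ S₁)
    (h1 : {r ∈ recCone S | dot c₂ r = 0} ⊆ {r ∈ recCone S | 0 ≤ dot c₁ r})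
    (h2 : {r ∈ recCone S | dot c₁ r = 0} ⊆ {r ∈ recCone S | 0 ≤ dot c₂ r}) :
    IsClosed (convexHull ℝ (S₁ ∪ S₂)) := by
  subst hS₁ hS₂
  obtain ⟨p, hp, -⟩ := not_subset.mp h12
  obtain ⟨q, hq, -⟩ := not_subset.mp h21
  have hne₁ : {x ∈ S | c₁₀ ≤ dot c₁ x}.Nonempty := ⟨p, hp⟩
  have hne₂ : {x ∈ S | c₂₀ ≤ dot c₂ x}.Nonempty := ⟨q, hq⟩
  have h1' : ∀ r ∈ recCone S, dot c₂ r = 0 → 0 ≤ dot c₁ r := fun r hr h0 => (h1 ⟨hr, h0⟩).2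
  have h2' : ∀ r ∈ recCone S, dot c₁ r = 0 → 0 ≤ dot c₂ r := fun r hr h0 => (h2 ⟨hr, h0⟩).2
  rw [Convex.convexHull_union (halfspace_convex hSconv c₁ c₁₀)
    (halfspace_convex hSconv c₂ c₂₀) hne₁ hne₂]
  refine isClosed_of_closure_subset fun z hz => ?_
  obtain ⟨w, hw, hwz⟩ := mem_closure_iff_seq_limit.mp hz
  have hw2 : ∀ k, ∃ a, (a ∈ S ∧ c₁₀ ≤ dot c₁ a) ∧ ∃ b, (b ∈ S ∧ c₂₀ ≤ dot c₂ b) ∧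
      ∃ u v : ℝ, 0 ≤ u ∧ 0 ≤ v ∧ u + v = 1 ∧ u • a + v • b = w k := by
    intro k
    obtain ⟨a, ha, b, hb, u, v, hu, hv, huv, heq⟩ := mem_convexJoin.mp (hw k)
    exact ⟨a, ha, b, hb, u, v, hu, hv, huv, heq⟩
  choose a ha b hb μ ν hμ0 hν0 hμν heq using hw2
  have haS : ∀ k, a k ∈ S := fun k => (ha k).1
  have hac : ∀ k, c₁₀ ≤ dot c₁ (a k) := fun k => (ha k).2
  have hbS : ∀ k, b k ∈ S := fun k => (hb k).1
  have hbc : ∀ k, c₂₀ ≤ dot c₂ (b k) := fun k => (hb k).2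
  have hz' : Tendsto (fun k => μ k • a k + ν k • b k) atTop (𝓝 z) :=
    hwz.congr fun k => (heq k).symm
  rcases vec_dichotomy a with ⟨A, φ, hφ, hAφ⟩ | hainf
  · rcases vec_dichotomy (fun k => b (φ k)) with ⟨B, φ₂, hφ₂, hBφ⟩ | hbinf
    · -- both have convergent subsequences
      have hρt : Tendsto (φ ∘ φ₂) atTop atTop := (hφ.comp hφ₂).tendsto_atTop
      exact case_both_converge hSclosed
        (a := fun k => a (φ (φ₂ k))) (b := fun k => b (φ (φ₂ k)))
        (μ := fun k => μ (φ (φ₂ k))) (ν := fun k => ν (φ (φ₂ k)))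
        (fun k => haS _) (fun k => hac _) (fun k => hbS _) (fun k => hbc _)
        (fun k => hμ0 _) (fun k => hν0 _) (fun k => hμν _)
        (hAφ.comp hφ₂.tendsto_atTop) hBφ (hz'.comp hρt)
    · -- a converges along φ, b escapes along φ
      exact case_escape hSclosed hSconv h1'
        (a := fun k => a (φ k)) (b := fun k => b (φ k))
        (μ := fun k => μ (φ k)) (ν := fun k => ν (φ k))
        (fun k => haS _) (fun k => hac _) (fun k => hbS _) (fun k => hbc _)
        (fun k => hμ0 _) (fun k => hν0 _) (fun k => hμν _)
        hAφ hbinf (hz'.comp hφ.tendsto_atTop)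
  · rcases vec_dichotomy b with ⟨B, φ, hφ, hBφ⟩ | hbinf
    · -- b converges along φ, a escapes
      rw [convexJoin_comm]
      refine case_escape hSclosed hSconv h2'
        (a := fun k => b (φ k)) (b := fun k => a (φ k))
        (μ := fun k => ν (φ k)) (ν := fun k => μ (φ k))
        (fun k => hbS _) (fun k => hbc _) (fun k => haS _) (fun k => hac _)
        (fun k => hν0 _) (fun k => hμ0 _) (fun k => by rw [add_comm]; exact hμν (φ k))
        hBφ (hainf.comp hφ.tendsto_atTop) ?_
      refine (hz'.comp hφ.tendsto_atTop).congr fun k => ?_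
      simp only [Function.comp_apply]
      abel
    · exact (case_both_escape hSclosed hSconv hSpointed haS hbS hμ0 hν0 hμν
        hainf hbinf hz').elim
end

section
/- Let p ∈ (1, ∞), Kₚⁿ = {x ∈ ℝⁿ : ‖(x₁,…,x_{n−1})‖ₚ ≤ xₙ}, t₁, t₂ > 0, i ∈ {1,…,n−1}, and set C₁ = {x ∈ Kₚⁿ : t₁xᵢ ≥ 1}, C₂ = {x ∈ Kₚⁿ : −t₂xᵢ ≥ 1}. Then conv(C₁ ∪ C₂) = {x ∈ Kₚⁿ : ‖(t₁+t₂)x̃ − 2(t₂xᵢ + 1)ẽⁱ‖ₚ ≤ (t₁+t₂)xₙ}, where x̃ = (x₁,…,x_{n−1}) and ẽⁱ is the i-th standard unit vector of ℝ^{n−1}. -/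
open Set

noncomputable section

/-- First `n` coordinates of `x ∈ ℝ^{n+1}`. -/
def tl {n : ℕ} (x : Fin (n+1) → ℝ) : Fin n → ℝ := fun i => x i.castSucc

/-- The `p`-norm of a vector in `ℝ^m`. -/
def pnorm {m : ℕ} (p : ℝ) (w : Fin m → ℝ) : ℝ :=
  (∑ j, |w j| ^ p) ^ (1 / p)

/-- The `p`-order cone in `ℝ^{n+1}`. -/
def pCone (n : ℕ) (p : ℝ) : Set (Fin (n+1) → ℝ) :=
  {x | pnorm p (tl x) ≤ x (Fin.last n)}

lemma pnorm_nonneg {m : ℕ} (p : ℝ) (w : Fin m → ℝ) : 0 ≤ pnorm p w :=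
  Real.rpow_nonneg (Finset.sum_nonneg fun j _ => Real.rpow_nonneg (abs_nonneg _) _) _

lemma pnorm_congr_abs {m : ℕ} (p : ℝ) {w₁ w₂ : Fin m → ℝ} (h : ∀ j, |w₁ j| = |w₂ j|) :
    pnorm p w₁ = pnorm p w₂ := by
  unfold pnorm
  congr 1
  exact Finset.sum_congr rfl fun j _ => by rw [h]

lemma pnorm_smul {m : ℕ} {p : ℝ} (hp : 0 < p) {c : ℝ} (hc : 0 ≤ c) (w : Fin m → ℝ) :
    pnorm p (fun j => c * w j) = c * pnorm p w := by
  unfold pnorm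
  have h1 : ∀ j : Fin m, |c * w j| ^ p = c ^ p * |w j| ^ p := fun j => by
    rw [abs_mul, abs_of_nonneg hc, Real.mul_rpow hc (abs_nonneg _)]
  simp_rw [h1, ← Finset.mul_sum]
  rw [Real.mul_rpow (Real.rpow_nonneg hc _)
      (Finset.sum_nonneg fun j _ => Real.rpow_nonneg (abs_nonneg _) _),
    ← Real.rpow_mul hc, mul_one_div_cancel hp.ne', Real.rpow_one]

lemma pnorm_mono {m : ℕ} {p : ℝ} (hp : 0 < p) {a b : Fin m → ℝ}
    (h : ∀ j, |a j| ≤ |b j|) : pnorm p a ≤ pnorm p b := by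
  unfold pnorm
  apply Real.rpow_le_rpow
    (Finset.sum_nonneg fun j _ => Real.rpow_nonneg (abs_nonneg _) _)
  · exact Finset.sum_le_sum fun j _ => Real.rpow_le_rpow (abs_nonneg _) (h j) hp.le
  · positivity

lemma pnorm_combo_le {m : ℕ} {p : ℝ} (hp : 1 ≤ p) {θ τ : ℝ} (hθ : 0 ≤ θ) (hτ : 0 ≤ τ)
    (a b : Fin m → ℝ) :
    pnorm p (fun j => θ * a j + τ * b j) ≤ θ * pnorm p a + τ * pnorm p b := by
  have h0 : 0 < p := lt_of_lt_of_le one_pos hp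
  calc pnorm p (fun j => θ * a j + τ * b j)
      ≤ pnorm p (fun j => θ * a j) + pnorm p (fun j => τ * b j) :=
        Real.Lp_add_le Finset.univ _ _ hp
    _ = θ * pnorm p a + τ * pnorm p b := by
        rw [pnorm_smul h0 hθ, pnorm_smul h0 hτ]

theorem stmt_19 {n : ℕ} (p : ℝ) (hp : 1 < p)
    (t₁ t₂ : ℝ) (ht₁ : 0 < t₁) (ht₂ : 0 < t₂) (i : Fin n)
    (C₁ C₂ : Set (Fin (n+1) → ℝ))
    (hC₁ : C₁ = {x ∈ pCone n p | 1 ≤ t₁ * x i.castSucc})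
    (hC₂ : C₂ = {x ∈ pCone n p | 1 ≤ -(t₂ * x i.castSucc)}) :
    convexHull ℝ (C₁ ∪ C₂) =
      {x ∈ pCone n p |
        pnorm p (fun j => (t₁ + t₂) * tl x j -
            2 * (t₂ * x i.castSucc + 1) * (if j = i then 1 else 0)) ≤
          (t₁ + t₂) * x (Fin.last n)} := by
  have hp0 : 0 < p := lt_trans one_pos hp
  have hs : 0 < t₁ + t₂ := by linarith
  apply Subset.antisymm
  · apply convexHull_min
    · rintro x (hx | hx)
      · rw [hC₁] at hx
        obtain ⟨hxK, hxi⟩ := hx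
        have hxi0 : 0 < x i.castSucc := by nlinarith
        refine ⟨hxK, ?_⟩
        calc pnorm p (fun j => (t₁ + t₂) * tl x j -
                2 * (t₂ * x i.castSucc + 1) * (if j = i then 1 else 0))
            ≤ pnorm p (fun j => (t₁ + t₂) * tl x j) := by
              apply pnorm_mono hp0
              intro j
              by_cases hj : j = i
              · subst hj
                simp only [if_pos, tl]
                have h2 : |(t₁ + t₂) * x j.castSucc| = (t₁ + t₂) * x j.castSucc := by
                  rw [abs_of_pos (by positivity)]
                rw [h2]
                rw [abs_le]
                constructor <;> nlinarith
              · simp [hj]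
          _ = (t₁ + t₂) * pnorm p (tl x) := pnorm_smul hp0 hs.le _
          _ ≤ (t₁ + t₂) * x (Fin.last n) := by
              exact mul_le_mul_of_nonneg_left hxK hs.le
      · rw [hC₂] at hx
        obtain ⟨hxK, hxi⟩ := hx
        have hxi0 : x i.castSucc < 0 := by nlinarith
        refine ⟨hxK, ?_⟩
        calc pnorm p (fun j => (t₁ + t₂) * tl x j -
                2 * (t₂ * x i.castSucc + 1) * (if j = i then 1 else 0))
            ≤ pnorm p (fun j => (t₁ + t₂) * tl x j) := by
              apply pnorm_mono hp0
              intro j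
              by_cases hj : j = i
              · subst hj
                simp only [if_pos, tl]
                have h2 : |(t₁ + t₂) * x j.castSucc| = -((t₁ + t₂) * x j.castSucc) := by
                  rw [abs_of_neg (by nlinarith)]
                rw [h2, abs_le]
                constructor <;> nlinarith
              · simp [hj]
          _ = (t₁ + t₂) * pnorm p (tl x) := pnorm_smul hp0 hs.le _
          _ ≤ (t₁ + t₂) * x (Fin.last n) := mul_le_mul_of_nonneg_left hxK hs.le
    · rintro x ⟨hxK, hxc⟩ y ⟨hyK, hyc⟩ θ τ hθ hτ hθτ
      have hτ' : τ = 1 - θ := by linarith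
      subst hτ'
      have htl : tl (θ • x + (1 - θ) • y) = fun j => θ * tl x j + (1 - θ) * tl y j := by
        funext j
        simp [tl, Pi.add_apply, Pi.smul_apply, smul_eq_mul]
      constructor
      · show pnorm p (tl (θ • x + (1 - θ) • y)) ≤ (θ • x + (1 - θ) • y) (Fin.last n)
        rw [htl]
        refine le_trans (pnorm_combo_le hp.le hθ hτ _ _) ?_
        have : (θ • x + (1 - θ) • y) (Fin.last n)
            = θ * x (Fin.last n) + (1 - θ) * y (Fin.last n) := by
          simp [Pi.add_apply, Pi.smul_apply, smul_eq_mul]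
        rw [this]
        exact add_le_add (mul_le_mul_of_nonneg_left hxK hθ)
          (mul_le_mul_of_nonneg_left hyK hτ)
      · show pnorm p (fun j => (t₁ + t₂) * tl (θ • x + (1 - θ) • y) j -
            2 * (t₂ * (θ • x + (1 - θ) • y) i.castSucc + 1) * (if j = i then 1 else 0)) ≤
          (t₁ + t₂) * (θ • x + (1 - θ) • y) (Fin.last n)
        have key : (fun j => (t₁ + t₂) * tl (θ • x + (1 - θ) • y) j -
              2 * (t₂ * (θ • x + (1 - θ) • y) i.castSucc + 1) * (if j = i then 1 else 0))
            = fun j => θ * ((t₁ + t₂) * tl x j -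
                2 * (t₂ * x i.castSucc + 1) * (if j = i then 1 else 0)) +
              (1 - θ) * ((t₁ + t₂) * tl y j -
                2 * (t₂ * y i.castSucc + 1) * (if j = i then 1 else 0)) := by
          funext j
          by_cases hj : j = i <;>
            simp [tl, hj, Pi.add_apply, Pi.smul_apply, smul_eq_mul] <;> ring
        rw [key]
        refine le_trans (pnorm_combo_le hp.le hθ hτ _ _) ?_
        have hv : (t₁ + t₂) * (θ • x + (1 - θ) • y) (Fin.last n)
            = θ * ((t₁ + t₂) * x (Fin.last n)) + (1 - θ) * ((t₁ + t₂) * y (Fin.last n)) := by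
          simp [Pi.add_apply, Pi.smul_apply, smul_eq_mul]; ring
        rw [hv]
        exact add_le_add (mul_le_mul_of_nonneg_left hxc hθ)
          (mul_le_mul_of_nonneg_left hyc hτ)
  · rintro x ⟨hxK, hxw⟩
    by_cases h₁ : 1 ≤ t₁ * x i.castSucc
    · exact subset_convexHull ℝ _ (Or.inl (by rw [hC₁]; exact ⟨hxK, h₁⟩))
    by_cases h₂ : 1 ≤ -(t₂ * x i.castSucc)
    · exact subset_convexHull ℝ _ (Or.inr (by rw [hC₂]; exact ⟨hxK, h₂⟩))
    push_neg at h₁ h₂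
    obtain ⟨si, hs_def⟩ : ∃ y : ℝ, y = t₁ + t₂ := ⟨_, rfl⟩
    obtain ⟨xi, hxi_def⟩ : ∃ y : ℝ, y = x i.castSucc := ⟨_, rfl⟩
    obtain ⟨A, hA_def⟩ : ∃ y : ℝ, y = (1 + t₂ * xi) / si := ⟨_, rfl⟩
    obtain ⟨B, hB_def⟩ : ∃ y : ℝ, y = (1 - t₁ * xi) / si := ⟨_, rfl⟩
    have hs' : 0 < si := by rw [hs_def]; exact hs
    have hA : 0 < A := by
      rw [hA_def, hxi_def]; exact div_pos (by linarith) hs'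
    have hB : 0 < B := by
      rw [hB_def, hxi_def]; exact div_pos (by linarith) hs'
    have hAB : 0 < A + B := by linarith
    obtain ⟨lam, hlam_def⟩ : ∃ y : ℝ, y = t₁ * A := ⟨_, rfl⟩
    have hlam : 0 < lam := by rw [hlam_def]; positivity
    have h1lam : 1 - lam = t₂ * B := by
      rw [hlam_def, hA_def, hB_def, hs_def]
      field_simp
      ring
    have h1lam0 : 0 < 1 - lam := by rw [h1lam]; positivity
    obtain ⟨al, hal_def⟩ : ∃ y : ℝ, y = A / (A + B) := ⟨_, rfl⟩
    have hal : 0 < al := by rw [hal_def]; positivity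
    have h1al : 1 - al = B / (A + B) := by
      rw [hal_def]
      field_simp
      ring
    have h1al0 : 0 < 1 - al := by rw [h1al]; positivity
    -- key identity : the i-th entry of the disjunction vector equals -si*(A+B)
    have hwi : (t₁ + t₂) * x i.castSucc - 2 * (t₂ * x i.castSucc + 1) * 1 = -(si * (A + B)) := by
      rw [hA_def, hB_def, ← hxi_def, hs_def]
      field_simp
      ring
    set x1 : Fin (n+1) → ℝ := fun j =>
      if j = Fin.last n then (al / lam) * x (Fin.last n)
      else if j = i.castSucc then 1 / t₁ else (al / lam) * x j with hx1_def
    set x2 : Fin (n+1) → ℝ := fun j =>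
      if j = Fin.last n then ((1 - al) / (1 - lam)) * x (Fin.last n)
      else if j = i.castSucc then -(1 / t₂) else ((1 - al) / (1 - lam)) * x j with hx2_def
    have hcastne : ∀ j : Fin n, (j.castSucc : Fin (n+1)) ≠ Fin.last n :=
      fun j => (Fin.castSucc_lt_last j).ne
    have hx1K : x1 ∈ pCone n p := by
      show pnorm p (tl x1) ≤ x1 (Fin.last n)
      have habs : ∀ j : Fin n, |tl x1 j| =
          |(al / (lam * si)) * ((t₁ + t₂) * tl x j -
            2 * (t₂ * x i.castSucc + 1) * (if j = i then 1 else 0))| := by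
        intro j
        by_cases hj : j = i
        · subst hj
          have h1 : tl x1 j = 1 / t₁ := by
            simp [tl, hx1_def, hcastne j]
          have h2 : (al / (lam * si)) * ((t₁ + t₂) * tl x j -
              2 * (t₂ * x j.castSucc + 1) * (if j = j then 1 else 0)) = -(1 / t₁) := by
            rw [if_pos rfl]
            have h3 : (t₁ + t₂) * tl x j -
                2 * (t₂ * x j.castSucc + 1) * 1 = -(si * (A + B)) := by
              rw [← hwi]; rfl
            rw [h3, hal_def, hlam_def]
            field_simp
          rw [h1, h2, abs_neg]
        · have h1 : tl x1 j = (al / lam) * x j.castSucc := by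
            simp [tl, hx1_def, hcastne j, (Fin.castSucc_inj.not.mpr hj : ¬ j.castSucc = i.castSucc)]
          have h2 : (al / (lam * si)) * ((t₁ + t₂) * tl x j -
              2 * (t₂ * x i.castSucc + 1) * (if j = i then 1 else 0))
              = (al / lam) * x j.castSucc := by
            rw [if_neg hj]
            simp only [tl]
            rw [mul_zero, sub_zero, ← hs_def]
            field_simp
          rw [h1, h2]
      have hc0 : (0:ℝ) ≤ al / (lam * si) := (div_pos hal (mul_pos hlam hs')).le
      calc pnorm p (tl x1)
          = pnorm p (fun j => (al / (lam * si)) * ((t₁ + t₂) * tl x j -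
              2 * (t₂ * x i.castSucc + 1) * (if j = i then 1 else 0))) :=
            pnorm_congr_abs p habs
        _ = (al / (lam * si)) * pnorm p (fun j => (t₁ + t₂) * tl x j -
              2 * (t₂ * x i.castSucc + 1) * (if j = i then 1 else 0)) :=
            pnorm_smul hp0 hc0 _
        _ ≤ (al / (lam * si)) * ((t₁ + t₂) * x (Fin.last n)) :=
            mul_le_mul_of_nonneg_left hxw hc0
        _ = x1 (Fin.last n) := by
            rw [hx1_def]
            simp only [if_pos rfl, ↓reduceIte]
            rw [← hs_def]
            field_simp
    have hx2K : x2 ∈ pCone n p := by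
      show pnorm p (tl x2) ≤ x2 (Fin.last n)
      have habs : ∀ j : Fin n, |tl x2 j| =
          |((1 - al) / ((1 - lam) * si)) * ((t₁ + t₂) * tl x j -
            2 * (t₂ * x i.castSucc + 1) * (if j = i then 1 else 0))| := by
        intro j
        by_cases hj : j = i
        · subst hj
          have h1 : tl x2 j = -(1 / t₂) := by
            simp [tl, hx2_def, hcastne j]
          have h2 : ((1 - al) / ((1 - lam) * si)) * ((t₁ + t₂) * tl x j -
              2 * (t₂ * x j.castSucc + 1) * (if j = j then 1 else 0)) = -(1 / t₂) := by
            rw [if_pos rfl]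
            have h3 : (t₁ + t₂) * tl x j -
                2 * (t₂ * x j.castSucc + 1) * 1 = -(si * (A + B)) := by
              rw [← hwi]; rfl
            rw [h3, h1al, h1lam]
            field_simp
          rw [h1, h2]
        · have h1 : tl x2 j = ((1 - al) / (1 - lam)) * x j.castSucc := by
            simp [tl, hx2_def, hcastne j, (Fin.castSucc_inj.not.mpr hj : ¬ j.castSucc = i.castSucc)]
          have h2 : ((1 - al) / ((1 - lam) * si)) * ((t₁ + t₂) * tl x j -
              2 * (t₂ * x i.castSucc + 1) * (if j = i then 1 else 0))
              = ((1 - al) / (1 - lam)) * x j.castSucc := by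
            rw [if_neg hj]
            simp only [tl]
            rw [mul_zero, sub_zero, ← hs_def]
            field_simp
          rw [h1, h2]
      have hc0 : (0:ℝ) ≤ (1 - al) / ((1 - lam) * si) :=
        (div_pos h1al0 (mul_pos h1lam0 hs')).le
      calc pnorm p (tl x2)
          = pnorm p (fun j => ((1 - al) / ((1 - lam) * si)) * ((t₁ + t₂) * tl x j -
              2 * (t₂ * x i.castSucc + 1) * (if j = i then 1 else 0))) :=
            pnorm_congr_abs p habs
        _ = ((1 - al) / ((1 - lam) * si)) * pnorm p (fun j => (t₁ + t₂) * tl x j -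
              2 * (t₂ * x i.castSucc + 1) * (if j = i then 1 else 0)) :=
            pnorm_smul hp0 hc0 _
        _ ≤ ((1 - al) / ((1 - lam) * si)) * ((t₁ + t₂) * x (Fin.last n)) :=
            mul_le_mul_of_nonneg_left hxw hc0
        _ = x2 (Fin.last n) := by
            rw [hx2_def]
            simp only [if_pos rfl, ↓reduceIte]
            rw [← hs_def]
            field_simp
    have hx1C : x1 ∈ C₁ := by
      rw [hC₁]
      refine ⟨hx1K, ?_⟩
      have h1 : x1 i.castSucc = 1 / t₁ := by
        simp [hx1_def, hcastne i]
      rw [h1, mul_one_div, div_self ht₁.ne']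
    have hx2C : x2 ∈ C₂ := by
      rw [hC₂]
      refine ⟨hx2K, ?_⟩
      have h1 : x2 i.castSucc = -(1 / t₂) := by
        simp [hx2_def, hcastne i]
      rw [h1, mul_neg, neg_neg, mul_one_div, div_self ht₂.ne']
    have hcomb : x = lam • x1 + (1 - lam) • x2 := by
      funext j
      rw [Pi.add_apply, Pi.smul_apply, Pi.smul_apply, smul_eq_mul, smul_eq_mul]
      refine Fin.lastCases ?_ ?_ j
      · rw [hx1_def, hx2_def]
        simp only [if_pos rfl, ↓reduceIte]
        field_simp
        ring
      · intro k
        by_cases hk : k = i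
        · subst hk
          have e1 : x1 k.castSucc = 1 / t₁ := by simp [hx1_def, hcastne k]
          have e2 : x2 k.castSucc = -(1 / t₂) := by simp [hx2_def, hcastne k]
          rw [e1, e2, h1lam, hlam_def, hA_def, hB_def, hxi_def, hs_def]
          field_simp
          ring
        · have e1 : x1 k.castSucc = (al / lam) * x k.castSucc := by
            simp [hx1_def, hcastne k, (Fin.castSucc_inj.not.mpr hk : ¬ k.castSucc = i.castSucc)]
          have e2 : x2 k.castSucc = ((1 - al) / (1 - lam)) * x k.castSucc := by
            simp [hx2_def, hcastne k, (Fin.castSucc_inj.not.mpr hk : ¬ k.castSucc = i.castSucc)]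
          rw [e1, e2]
          field_simp
          ring
    rw [hcomb]
    exact (convex_convexHull ℝ (C₁ ∪ C₂))
      (subset_convexHull ℝ _ (Or.inl hx1C))
      (subset_convexHull ℝ _ (Or.inr hx2C))
      hlam.le h1lam0.le (by ring)
end
end
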